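/- arXiv:1304.6746 — 5 statements merged into one kernel-verified Lean document; each statement's English description precedes it below -/
import Mathlib

section
/- Let Σ be a diagonal k×k matrix with positive diagonal entries σ₁₁,…,σ_kk, and let f(x) = x₁^{α₁}·x₂^{α₂}···x_k^{α_k} with nonnegative real exponents α₁,…,α_k that are not all zero. Then W_{f,Σ} is distributed as (1/(α₁+···+α_k)²)·χ²₁; equivalently, if X₁,…,X_k are independent with X_i ~ N(0,σ_ii), then (α₁²σ₁₁/X₁² + ··· + α_k²σ_kk/X_k²)^{-1} has the distribution of Z²/(α₁+···+α_k)² for Z a standard normal random variable. -/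
open MeasureTheory ProbabilityTheory Matrix MvPolynomial Real

noncomputable section

/-- The distribution of a vector of independent standard normal random variables. -/
def stdGaussian (ι : Type*) [Fintype ι] : Measure (ι → ℝ) :=
  Measure.pi fun _ => gaussianReal 0 1

/-- `μ` is the distribution of a centered Gaussian random vector with covariance matrix `S`,
i.e. `μ` is the law of `A Z` for a vector `Z` of i.i.d. standard normals with `A Aᵀ = S`. -/
def IsCenteredGaussian {ι : Type*} [Fintype ι] (μ : Measure (ι → ℝ))
    (S : Matrix ι ι ℝ) : Prop :=
  ∃ A : Matrix ι ι ℝ, A * Aᵀ = S ∧ μ = (stdGaussian ι).map A.mulVec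

/-- The gradient of a polynomial. -/
def polyGrad {ι : Type*} [Fintype ι] (f : MvPolynomial ι ℝ) (x : ι → ℝ) : ι → ℝ :=
  fun i => eval x (pderiv i f)

/-- The Wald ratio `W_{f,S}(x) = f(x)² / (∇f(x)ᵀ S ∇f(x))`. -/
def waldRV {ι : Type*} [Fintype ι] (f : MvPolynomial ι ℝ) (S : Matrix ι ι ℝ)
    (x : ι → ℝ) : ℝ :=
  (eval x f) ^ 2 / (polyGrad f x ⬝ᵥ S.mulVec (polyGrad f x))

/-- The chi-square distribution with `k` degrees of freedom. -/
def chiSq (k : ℕ) : Measure ℝ :=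
  (stdGaussian (Fin k)).map fun z => ∑ i, (z i) ^ 2

open Set Filter Topology
open scoped NNReal ENNReal

namespace ChiAux

variable {d : ℝ}

lemma deriv_cs (hd : 0 < d) : ∀ x ∈ Ioi (0:ℝ),
    HasDerivWithinAt (fun x => x - d/x) (1 + d/x^2) (Ioi 0) x := by
  intro x hx
  have hx0 : x ≠ 0 := ne_of_gt hx
  have h1 : HasDerivAt (fun x : ℝ => x - d * x⁻¹) (1 - d * (-(x^2)⁻¹)) x :=
    (hasDerivAt_id x).sub ((hasDerivAt_inv hx0).const_mul d)
  have h2 : (fun x : ℝ => x - d * x⁻¹) = fun x : ℝ => x - d / x := by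
    funext y; rw [div_eq_mul_inv]
  rw [h2] at h1
  rw [show 1 + d/x^2 = 1 - d * (-(x^2)⁻¹) by ring]
  exact h1.hasDerivWithinAt

lemma inj_cs (hd : 0 < d) : InjOn (fun x => x - d/x) (Ioi (0:ℝ)) := by
  intro a ha b hb h
  simp only at h
  have ha0 : (0:ℝ) < a := ha
  have hb0 : (0:ℝ) < b := hb
  have key : (a - b) * (a * b + d) = ((a - d / a) - (b - d / b)) * (a * b) := by
    field_simp
    ring
  rw [h, sub_self, zero_mul] at key
  rcases mul_eq_zero.mp key with h1 | h1
  · linarith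
  · nlinarith

lemma image_cs (hd : 0 < d) : (fun x => x - d/x) '' (Ioi (0:ℝ)) = univ := by
  apply eq_univ_of_forall
  intro y
  set s := Real.sqrt (y^2 + 4*d) with hs_def
  have hs : s ^ 2 = y^2 + 4*d := Real.sq_sqrt (by positivity)
  have hs0 : 0 ≤ s := Real.sqrt_nonneg _
  have hsy : -y < s := by nlinarith [neg_abs_le y, abs_nonneg y, sq_abs y]
  have hys : 0 < y + s := by linarith
  refine ⟨(y + s)/2, ?_, ?_⟩
  · simp only [mem_Ioi]; linarith
  · show (y + s)/2 - d/((y + s)/2) = y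
    rw [div_div_eq_mul_div]
    field_simp
    linear_combination hs

lemma inj_inv (hd : 0 < d) : InjOn (fun x => d/x) (Ioi (0:ℝ)) := by
  intro a ha b hb h
  simp only at h
  have ha0 : (0:ℝ) < a := ha
  have hb0 : (0:ℝ) < b := hb
  field_simp at h
  linarith

lemma image_inv (hd : 0 < d) : (fun x => d/x) '' (Ioi (0:ℝ)) = Ioi (0:ℝ) := by
  ext y
  constructor
  · rintro ⟨x, hx, rfl⟩
    exact div_pos hd hx
  · intro hy
    exact ⟨d/y, div_pos hd hy, by field_simp⟩

lemma deriv_inv_cs (hd : 0 < d) : ∀ x ∈ Ioi (0:ℝ),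
    HasDerivWithinAt (fun x => d/x) (-(d/x^2)) (Ioi 0) x := by
  intro x hx
  have hx0 : x ≠ 0 := ne_of_gt (mem_Ioi.mp hx)
  have h1 : HasDerivAt (fun x : ℝ => d * x⁻¹) (d * (-(x^2)⁻¹)) x :=
    (hasDerivAt_inv hx0).const_mul d
  have h2 : (fun x : ℝ => d * x⁻¹) = fun x : ℝ => d / x := by
    funext y; rw [div_eq_mul_inv]
  rw [h2] at h1
  rw [show -(d/x^2) = d * (-(x^2)⁻¹) by ring]
  exact h1.hasDerivWithinAt


/-- The function `F d x = exp(-(x - d/x)^2/2)`. -/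
def F (d x : ℝ) : ℝ := exp (-(x - d/x)^2/2)

lemma contOn_F (hd : 0 < d) : ContinuousOn (F d) (Ioi 0) := by
  apply Continuous.comp_continuousOn continuous_exp
  apply ContinuousOn.div_const
  apply ContinuousOn.neg
  apply ContinuousOn.pow
  exact continuousOn_id.sub (continuousOn_const.div continuousOn_id
    (fun x hx => ne_of_gt (mem_Ioi.mp hx)))

lemma F_le (hd : 0 < d) {x : ℝ} (hx : x ∈ Ioi (0:ℝ)) :
    F d x ≤ exp d * exp (-(1/2) * x^2) := by
  rw [F, ← exp_add, exp_le_exp]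
  have hx0 : x ≠ 0 := ne_of_gt (mem_Ioi.mp hx)
  have hxd : x * (d/x) = d := by field_simp
  nlinarith [sq_nonneg (d/x)]

lemma int_F (hd : 0 < d) : IntegrableOn (F d) (Ioi 0) := by
  apply Integrable.mono'
    (((integrable_exp_neg_mul_sq (by norm_num : (0:ℝ) < 1/2)).const_mul (exp d)).integrableOn
      (s := Ioi 0))
  · exact (contOn_F hd).aestronglyMeasurable measurableSet_Ioi
  · rw [ae_restrict_iff' measurableSet_Ioi]
    filter_upwards with x hx
    rw [Real.norm_eq_abs, abs_of_pos (by rw [F]; exact exp_pos _)]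
    exact F_le hd hx

lemma int_G (hd : 0 < d) : IntegrableOn (fun x => (d/x^2) * F d x) (Ioi 0) := by
  have h := (integrableOn_image_iff_integrableOn_abs_deriv_smul measurableSet_Ioi
    (deriv_inv_cs hd) (inj_inv hd) (F d)).mp
  rw [image_inv hd] at h
  have h2 := h (int_F hd)
  apply h2.congr_fun _ measurableSet_Ioi
  intro x hx
  have hx0 : x ≠ 0 := ne_of_gt (mem_Ioi.mp hx)
  have hdx : d / (d/x) = x := by field_simp
  simp only [smul_eq_mul, abs_neg, abs_of_pos (div_pos hd (pow_pos (mem_Ioi.mp hx) 2)), F, hdx]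
  rw [show d/x - x = -(x - d/x) by ring, neg_sq]

lemma cs_total (hd : 0 < d) :
    ∫ x in Ioi (0:ℝ), (1 + d/x^2) * F d x = Real.sqrt (2*π) := by
  have h := integral_image_eq_integral_abs_deriv_smul measurableSet_Ioi
    (deriv_cs hd) (inj_cs hd) (fun y => exp (-y^2/2))
  rw [image_cs hd, Measure.restrict_univ] at h
  have hL : ∫ y : ℝ, exp (-y^2/2) = Real.sqrt (2*π) := by
    have : ∀ y : ℝ, exp (-y^2/2) = exp (-(1/2) * y^2) := by intro y; ring_nf
    simp_rw [this, integral_gaussian]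
    rw [show π / (1/2) = 2 * π by ring]
  rw [hL] at h
  rw [h]
  apply setIntegral_congr_fun measurableSet_Ioi
  intro x hx
  have hx0 : (0:ℝ) < x := mem_Ioi.mp hx
  have hpos : (0:ℝ) < 1 + d/x^2 := by positivity
  simp only [smul_eq_mul, abs_of_pos hpos, F]

lemma cs_inv (hd : 0 < d) :
    ∫ x in Ioi (0:ℝ), F d x = ∫ x in Ioi (0:ℝ), (d/x^2) * F d x := by
  have h := integral_image_eq_integral_abs_deriv_smul measurableSet_Ioi
    (deriv_inv_cs hd) (inj_inv hd) (F d)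
  rw [image_inv hd] at h
  rw [h]
  apply setIntegral_congr_fun measurableSet_Ioi
  intro x hx
  have hx0 : x ≠ 0 := ne_of_gt (mem_Ioi.mp hx)
  have hdx : d / (d/x) = x := by field_simp
  simp only [smul_eq_mul, abs_neg, abs_of_pos (div_pos hd (pow_pos (mem_Ioi.mp hx) 2)), F, hdx]
  rw [show d/x - x = -(x - d/x) by ring, neg_sq]

lemma J_val (hd : 0 < d) : ∫ x in Ioi (0:ℝ), F d x = Real.sqrt (2*π) / 2 := by
  have h1 := cs_total hd
  have h2 := cs_inv hd
  have h3 : ∫ x in Ioi (0:ℝ), (1 + d/x^2) * F d x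
      = (∫ x in Ioi (0:ℝ), F d x) + ∫ x in Ioi (0:ℝ), (d/x^2) * F d x := by
    rw [← integral_add (int_F hd) (int_G hd)]
    apply setIntegral_congr_fun measurableSet_Ioi
    intro x _
    ring
  rw [h3, ← h2] at h1
  linarith

lemma int_halfline (hd : 0 < d) :
    ∫ x in Ioi (0:ℝ), exp (-(x^2/2) - d^2/(2*x^2)) = exp (-d) * (Real.sqrt (2*π) / 2) := by
  rw [← J_val hd, ← MeasureTheory.integral_const_mul]
  apply setIntegral_congr_fun measurableSet_Ioi
  intro x hx
  have hx0 : x ≠ 0 := ne_of_gt (mem_Ioi.mp hx)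
  simp only [F]
  rw [← exp_add]
  congr 1
  field_simp
  ring


lemma int_line_integrable (hd : 0 < d) :
    Integrable (fun x : ℝ => exp (-(x^2/2) - d^2/(2*x^2))) := by
  apply Integrable.mono'
    ((integrable_exp_neg_mul_sq (by norm_num : (0:ℝ) < 1/2)).const_mul (exp d))
  · apply Measurable.aestronglyMeasurable
    fun_prop
  · filter_upwards with x
    rw [Real.norm_eq_abs, abs_of_pos (exp_pos _), ← exp_add, exp_le_exp]
    rcases eq_or_ne x 0 with rfl | hx0
    · simp
      positivity
    · have h1 : 0 ≤ d^2/(2*x^2) := by positivity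
      nlinarith

lemma int_line (hd : 0 < d) :
    ∫ x : ℝ, exp (-(x^2/2) - d^2/(2*x^2)) = exp (-d) * Real.sqrt (2*π) := by
  set f : ℝ → ℝ := fun x => exp (-(x^2/2) - d^2/(2*x^2)) with hf
  have hint := int_line_integrable hd
  have hsplit : ∫ x : ℝ, f x = (∫ x in Iic (0:ℝ), f x) + ∫ x in Ioi (0:ℝ), f x := by
    rw [← setIntegral_union (Iic_disjoint_Ioi le_rfl) measurableSet_Ioi
      hint.integrableOn hint.integrableOn, Iic_union_Ioi, setIntegral_univ]
  have heven : ∀ x : ℝ, f (-x) = f x := by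
    intro x; simp only [hf]; ring_nf
  have hIic : ∫ x in Iic (0:ℝ), f x = ∫ x in Ioi (0:ℝ), f x := by
    have := integral_comp_neg_Iic (0:ℝ) (fun y => f (-y))
    simp only [neg_neg, neg_zero] at this
    rw [this]
    exact setIntegral_congr_fun measurableSet_Ioi (fun x _ => heven x)
  rw [hsplit, hIic, int_halfline hd]
  ring

lemma integral_gaussianReal_std (g : ℝ → ℝ) :
    ∫ x, g x ∂(gaussianReal 0 1) = ∫ x, gaussianPDFReal 0 1 x * g x := by
  rw [gaussianReal_of_var_ne_zero 0 one_ne_zero]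
  have h1 : gaussianPDF 0 1 = fun x => ((Real.toNNReal (gaussianPDFReal 0 1 x) : ℝ≥0) : ℝ≥0∞) := by
    funext x; rfl
  rw [h1, integral_withDensity_eq_integral_smul]
  · congr 1
    funext x
    rw [NNReal.smul_def, smul_eq_mul, Real.coe_toNNReal _ (gaussianPDFReal_nonneg 0 1 x)]
  · exact (measurable_gaussianPDFReal 0 1).real_toNNReal

lemma gaussianPDFReal_std (x : ℝ) :
    gaussianPDFReal 0 1 x = (Real.sqrt (2*π))⁻¹ * exp (-(x^2/2)) := by
  simp only [gaussianPDFReal, NNReal.coe_one, mul_one, sub_zero]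
  rw [neg_div]

lemma laplace_std {a s : ℝ} (ha : 0 ≤ a) (hs : 0 < s) :
    ∫ x, exp (-(s * (a^2/x^2))) ∂(gaussianReal 0 1) = exp (-(a * Real.sqrt (2*s))) := by
  rcases eq_or_lt_of_le ha with rfl | ha0
  · simp
  · set d : ℝ := a * Real.sqrt (2*s) with hd_def
    have hs2 : Real.sqrt (2*s) ^ 2 = 2*s := Real.sq_sqrt (by positivity)
    have hd : 0 < d := by
      apply mul_pos ha0
      rw [show (0:ℝ) < Real.sqrt (2*s) ↔ _ from Iff.rfl]
      exact Real.sqrt_pos.mpr (by positivity)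
    rw [integral_gaussianReal_std]
    have hcongr : ∀ x : ℝ, gaussianPDFReal 0 1 x * exp (-(s * (a^2/x^2)))
        = (Real.sqrt (2*π))⁻¹ * exp (-(x^2/2) - d^2/(2*x^2)) := by
      intro x
      rw [gaussianPDFReal_std, mul_assoc, ← exp_add]
      congr 2
      have hdsq : d^2 = 2 * s * a^2 := by rw [hd_def]; rw [mul_pow, hs2]; ring
      rcases eq_or_ne x 0 with rfl | hx0
      · simp
      · rw [hdsq]; field_simp; ring
    simp_rw [hcongr]
    rw [MeasureTheory.integral_const_mul, int_line hd]
    have hne : Real.sqrt (2*π) ≠ 0 := by positivity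
    field_simp

lemma laplace_var {a v s : ℝ} (ha : 0 ≤ a) (hv : 0 < v) (hs : 0 < s) :
    ∫ x, exp (-(s * (a^2 * v / x^2))) ∂(gaussianReal 0 v.toNNReal)
      = exp (-(a * Real.sqrt (2*s))) := by
  set c : ℝ := Real.sqrt v with hc_def
  have hc2 : c^2 = v := Real.sq_sqrt hv.le
  have hmap : (gaussianReal 0 1).map (c * ·) = gaussianReal 0 v.toNNReal := by
    rw [gaussianReal_map_const_mul c]
    congr 1
    · ring
    · ext
      simp [hc2, Real.coe_toNNReal _ hv.le]
  rw [← hmap, integral_map (by fun_prop) (by apply Measurable.aestronglyMeasurable; fun_prop)]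
  have hcongr : ∀ x : ℝ, exp (-(s * (a^2 * v / (c * x)^2))) = exp (-(s * (a^2 / x^2))) := by
    intro x
    congr 2
    rw [mul_pow, hc2, mul_comm (a^2) v, mul_div_mul_left _ _ (ne_of_gt hv)]
  simp_rw [hcongr]
  exact laplace_std ha hs


/-- A probability measure concentrated on `[0,1]` is determined by its moments. -/
lemma moments_determine (μ' ν' : Measure ℝ) [IsProbabilityMeasure μ'] [IsProbabilityMeasure ν']
    (hμ : ∀ᵐ x ∂μ', x ∈ Icc (0:ℝ) 1) (hν : ∀ᵐ x ∂ν', x ∈ Icc (0:ℝ) 1)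
    (hm : ∀ n : ℕ, ∫ x, x^n ∂μ' = ∫ x, x^n ∂ν') : μ' = ν' := by
  have hci : ∀ (ξ : Measure ℝ) [IsProbabilityMeasure ξ], (∀ᵐ x ∂ξ, x ∈ Icc (0:ℝ) 1) →
      ∀ (g : ℝ → ℝ), Continuous g → Integrable g ξ := by
    intro ξ _ hξ g hg
    obtain ⟨C, hC⟩ := isCompact_Icc.exists_bound_of_continuousOn (hg.continuousOn (s := Icc 0 1))
    apply Integrable.mono' (integrable_const C) hg.aestronglyMeasurable
    filter_upwards [hξ] with x hx
    exact hC x hx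
  have hp : ∀ q : Polynomial ℝ, ∫ x, q.eval x ∂μ' = ∫ x, q.eval x ∂ν' := by
    intro q
    have hev : ∀ x : ℝ, q.eval x = ∑ i ∈ Finset.range (q.natDegree + 1), q.coeff i * x^i :=
      fun x => Polynomial.eval_eq_sum_range x
    simp_rw [hev]
    rw [integral_finset_sum, integral_finset_sum]
    · exact Finset.sum_congr rfl fun i _ => by
        rw [MeasureTheory.integral_const_mul, MeasureTheory.integral_const_mul, hm i]
    · exact fun i _ => ((hci ν' hν _ (continuous_pow i)).const_mul _)
    · exact fun i _ => ((hci μ' hμ _ (continuous_pow i)).const_mul _)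
  have key : ∀ g : ℝ → ℝ, Continuous g → ∫ x, g x ∂μ' = ∫ x, g x ∂ν' := by
    intro g hg
    have hABle : ∀ ε : ℝ, 0 < ε → |(∫ x, g x ∂μ') - ∫ x, g x ∂ν'| ≤ 2 * ε := by
      intro ε hε
      have hW := polynomialFunctions_closure_eq_top (0:ℝ) 1
      set gK : C(Icc (0:ℝ) 1, ℝ) := ⟨fun x => g x, hg.comp continuous_subtype_val⟩ with hgK
      have hmem : gK ∈ (polynomialFunctions (Icc (0:ℝ) 1)).topologicalClosure := by
        rw [hW]; trivial
      have hmem' : gK ∈ closure ((polynomialFunctions (Icc (0:ℝ) 1)) : Set C(Icc (0:ℝ) 1, ℝ)) :=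
        hmem
      rw [Metric.mem_closure_iff] at hmem'
      obtain ⟨p, hp_mem, hp_dist⟩ := hmem' ε hε
      obtain ⟨q, -, rfl⟩ := Subalgebra.mem_map.mp hp_mem
      have hqx : ∀ x ∈ Icc (0:ℝ) 1, |g x - q.eval x| ≤ ε := by
        intro x hx
        have h := ContinuousMap.dist_apply_le_dist (f := gK)
          (g := (Polynomial.toContinuousMapOnAlgHom (Icc (0:ℝ) 1)) q) ⟨x, hx⟩
        rw [Real.dist_eq] at h
        exact le_trans h hp_dist.le
      have hq_cont : Continuous (fun x : ℝ => q.eval x) := q.continuous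
      have h1 : ∀ (ξ : Measure ℝ) [IsProbabilityMeasure ξ], (∀ᵐ x ∂ξ, x ∈ Icc (0:ℝ) 1) →
          |(∫ x, g x ∂ξ) - ∫ x, q.eval x ∂ξ| ≤ ε := by
        intro ξ _ hξ
        rw [← integral_sub (hci ξ hξ g hg) (hci ξ hξ _ hq_cont)]
        have h := norm_integral_le_of_norm_le (μ := ξ) (f := fun x => g x - q.eval x)
          (integrable_const ε) ?_
        · simpa using le_trans h (by simp)
        · filter_upwards [hξ] with x hx
          simpa using hqx x hx
      have h2 := h1 μ' hμ
      have h3 := h1 ν' hν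
      have h4 : ∫ x, q.eval x ∂μ' = ∫ x, q.eval x ∂ν' := hp q
      have h5 := abs_sub_le (∫ x, g x ∂μ') (∫ x, q.eval x ∂μ') (∫ x, g x ∂ν')
      have h6 : |(∫ x, q.eval x ∂μ') - ∫ x, g x ∂ν'|
          = |(∫ x, g x ∂ν') - ∫ x, q.eval x ∂ν'| := by rw [h4, abs_sub_comm]
      linarith
    by_contra hne
    have hc : 0 < |(∫ x, g x ∂μ') - ∫ x, g x ∂ν'| := by
      rw [abs_pos, sub_ne_zero]; exact hne
    have := hABle (|(∫ x, g x ∂μ') - ∫ x, g x ∂ν'| / 4) (by linarith)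
    linarith
  apply Measure.ext_of_Iic
  intro c
  set gseq : ℕ → ℝ → ℝ := fun n x => max 0 (min 1 (1 - n * (x - c))) with hgseq
  have hgc : ∀ n, Continuous (gseq n) := by
    intro n
    apply continuous_const.max
    apply continuous_const.min
    exact continuous_const.sub (continuous_const.mul (continuous_id.sub continuous_const))
  have hbdd : ∀ n x, |gseq n x| ≤ 1 := by
    intro n x
    rw [abs_le]
    refine ⟨?_, max_le zero_le_one (min_le_left _ _)⟩
    have : (0:ℝ) ≤ max 0 (min 1 (1 - n * (x - c))) := le_max_left _ _
    linarith
  have htend : ∀ x : ℝ, Tendsto (fun n => gseq n x) atTop (𝓝 (Set.indicator (Iic c) 1 x)) := by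
    intro x
    rcases le_or_gt x c with hx | hx
    · have hval : ∀ n : ℕ, gseq n x = 1 := by
        intro n
        have h1 : (1:ℝ) ≤ 1 - n * (x - c) := by
          have : (n:ℝ) * (x - c) ≤ 0 :=
            mul_nonpos_of_nonneg_of_nonpos (Nat.cast_nonneg n) (by linarith)
          linarith
        simp only [hgseq, min_eq_left h1, max_eq_right zero_le_one]
      have hind : Set.indicator (Iic c) (1 : ℝ → ℝ) x = 1 := by
        rw [Set.indicator_of_mem (mem_Iic.mpr hx)]; rfl
      rw [hind]
      simp_rw [hval]
      exact tendsto_const_nhds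
    · have hind : Set.indicator (Iic c) (1 : ℝ → ℝ) x = 0 :=
        Set.indicator_of_notMem (by simp [hx, not_le]) _
      rw [hind]
      have hev : ∀ᶠ n : ℕ in atTop, gseq n x = 0 := by
        filter_upwards [eventually_ge_atTop ⌈1/(x - c)⌉₊] with n hn
        have hxc : 0 < x - c := by linarith
        have h1 : 1/(x - c) ≤ (n:ℝ) := le_trans (Nat.le_ceil _) (Nat.cast_le.mpr hn)
        have h2 : (1:ℝ) ≤ n * (x - c) := by
          rw [div_le_iff₀ hxc] at h1
          linarith
        have h3 : 1 - n * (x - c) ≤ 0 := by linarith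
        simp only [hgseq]
        rw [max_eq_left (le_trans (min_le_right _ _) h3)]
      exact Tendsto.congr' (hev.mono fun n hn => hn.symm) tendsto_const_nhds
  have hdc : ∀ (ξ : Measure ℝ) [IsProbabilityMeasure ξ],
      Tendsto (fun n => ∫ x, gseq n x ∂ξ) atTop (𝓝 ((ξ (Iic c)).toReal)) := by
    intro ξ _
    have h := tendsto_integral_of_dominated_convergence (μ := ξ) (bound := fun _ => (1:ℝ))
      (F := gseq) (f := Set.indicator (Iic c) 1)
      (fun n => (hgc n).aestronglyMeasurable) (integrable_const 1)
      (fun n => ae_of_all _ (fun x => by simpa using hbdd n x))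
      (ae_of_all _ htend)
    rwa [integral_indicator_one measurableSet_Iic] at h
  have huniq := tendsto_nhds_unique ((hdc μ').congr (fun n => key _ (hgc n))) (hdc ν')
  exact (ENNReal.toReal_eq_toReal_iff' (measure_ne_top _ _) (measure_ne_top _ _)).mp huniq


/-- Two probability measures on `[0,∞)` with the same Laplace transform are equal. -/
lemma laplace_ext (μ ν : Measure ℝ) [IsProbabilityMeasure μ] [IsProbabilityMeasure ν]
    (hμ : μ (Iio 0) = 0) (hν : ν (Iio 0) = 0)
    (h : ∀ s : ℝ, 0 < s → ∫ t, exp (-(s*t)) ∂μ = ∫ t, exp (-(s*t)) ∂ν) : μ = ν := by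
  set T : ℝ → ℝ := fun t => exp (-t) with hT
  have hTc : Continuous T := by fun_prop
  have hTinj : Function.Injective T := fun a b hab => by
    have := Real.exp_eq_exp.mp hab
    linarith
  have hTm : Measurable T := hTc.measurable
  haveI : IsProbabilityMeasure (μ.map T) := Measure.isProbabilityMeasure_map hTm.aemeasurable
  haveI : IsProbabilityMeasure (ν.map T) := Measure.isProbabilityMeasure_map hTm.aemeasurable
  have hsupp : ∀ (ξ : Measure ℝ), ξ (Iio 0) = 0 → ∀ᵐ x ∂(ξ.map T), x ∈ Icc (0:ℝ) 1 := by
    intro ξ hξ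
    rw [ae_iff]
    have hcompl : {x : ℝ | ¬ x ∈ Icc (0:ℝ) 1} = (Icc (0:ℝ) 1)ᶜ := rfl
    rw [hcompl, Measure.map_apply hTm measurableSet_Icc.compl]
    apply measure_mono_null _ hξ
    intro t ht
    simp only [mem_preimage, mem_compl_iff, mem_Icc, not_and_or, not_le] at ht
    rcases ht with h1 | h1
    · exact absurd h1 (not_lt.mpr (exp_pos _).le)
    · have h2 : (0:ℝ) < -t := by
        rw [← Real.exp_zero] at h1
        exact Real.exp_lt_exp.mp h1
      exact mem_Iio.mpr (by linarith)
  have hmom : ∀ n : ℕ, ∫ x, x^n ∂(μ.map T) = ∫ x, x^n ∂(ν.map T) := by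
    intro n
    rw [integral_map hTm.aemeasurable (by fun_prop), integral_map hTm.aemeasurable (by fun_prop)]
    rcases Nat.eq_zero_or_pos n with rfl | hn
    · simp
    · have hrw : ∀ t : ℝ, (T t)^n = exp (-((n:ℝ)*t)) := by
        intro t
        rw [hT, ← Real.exp_nat_mul]
        congr 1
        ring
      simp_rw [hrw]
      exact h n (Nat.cast_pos.mpr hn)
  have hmain := moments_determine (μ.map T) (ν.map T) (hsupp μ hμ) (hsupp ν hν) hmom
  have hemb : MeasurableEmbedding T := hTc.measurableEmbedding hTinj
  ext s hs
  have h1 : μ s = (μ.map T) (T '' s) := by rw [hemb.map_apply, preimage_image_eq s hTinj]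
  have h2 : ν s = (ν.map T) (T '' s) := by rw [hemb.map_apply, preimage_image_eq s hTinj]
  rw [h1, hmain, ← h2]


lemma pi_prod_integral {k : ℕ} (μ : Fin k → Measure ℝ) [h : ∀ i, SigmaFinite (μ i)]
    (f : Fin k → ℝ → ℝ) :
    ∫ x, ∏ i, f i (x i) ∂(Measure.pi μ) = ∏ i, ∫ y, f i y ∂(μ i) :=
  MeasureTheory.integral_fintype_prod_eq_prod (μ := μ) f


end ChiAux

open ChiAux

/-- For a diagonal covariance matrix with positive diagonal entries
`σ₁₁, …, σ_kk` and `f(x) = x₁^{α₁} ⋯ x_k^{α_k}` with nonnegative real exponents, not all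
zero, `W_{f,Σ} ~ (α₁ + ⋯ + α_k)⁻² χ²₁`; equivalently, for independent `Xᵢ ~ N(0, σᵢᵢ)`,
`(α₁²σ₁₁/X₁² + ⋯ + α_k²σ_kk/X_k²)⁻¹` is distributed as `Z²/(α₁ + ⋯ + α_k)²`
for a standard normal `Z`. -/

theorem monomial_diagonal_chiSq
    {k : ℕ} (σ : Fin k → ℝ) (hσ : ∀ i, 0 < σ i)
    (α : Fin k → ℝ) (hα : ∀ i, 0 ≤ α i) (hα0 : α ≠ 0) :
    (Measure.pi fun i => gaussianReal 0 (σ i).toNNReal).map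
        (fun x => (∑ i, α i ^ 2 * σ i / (x i) ^ 2)⁻¹) =
      (gaussianReal 0 1).map (fun z => z ^ 2 / (∑ i, α i) ^ 2) := by
  classical
  set A : ℝ := ∑ i, α i with hA_def
  have hA : 0 ≤ A := Finset.sum_nonneg (fun i _ => hα i)
  set P : Measure (Fin k → ℝ) := Measure.pi fun i => gaussianReal 0 (σ i).toNNReal with hP_def
  set S : (Fin k → ℝ) → ℝ := fun x => ∑ i, α i ^ 2 * σ i / (x i) ^ 2 with hS_def
  have hSm : Measurable S := by
    apply Finset.measurable_sum
    intro i _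
    exact measurable_const.div ((measurable_pi_apply i).pow measurable_const)
  have hSnn : ∀ x, 0 ≤ S x := fun x =>
    Finset.sum_nonneg fun i _ => div_nonneg (mul_nonneg (sq_nonneg _) (hσ i).le) (sq_nonneg _)
  set g : ℝ → ℝ := fun z => A^2 / z^2 with hg_def
  have hgm : Measurable g := measurable_const.div (measurable_id.pow measurable_const)
  have hgnn : ∀ z, 0 ≤ g z := fun z => div_nonneg (sq_nonneg _) (sq_nonneg _)
  haveI : IsProbabilityMeasure P := by rw [hP_def]; infer_instance
  have hmap : P.map S = (gaussianReal 0 1).map g := by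
    haveI : IsProbabilityMeasure (P.map S) := Measure.isProbabilityMeasure_map hSm.aemeasurable
    haveI : IsProbabilityMeasure ((gaussianReal 0 1).map g) :=
      Measure.isProbabilityMeasure_map hgm.aemeasurable
    apply laplace_ext
    · rw [Measure.map_apply hSm measurableSet_Iio]
      have he : S ⁻¹' (Iio 0) = ∅ :=
        eq_empty_of_forall_notMem fun x hx => absurd (mem_Iio.mp hx) (not_lt.mpr (hSnn x))
      rw [he]; exact measure_empty
    · rw [Measure.map_apply hgm measurableSet_Iio]
      have he : g ⁻¹' (Iio 0) = ∅ :=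
        eq_empty_of_forall_notMem fun z hz => absurd (mem_Iio.mp hz) (not_lt.mpr (hgnn z))
      rw [he]; exact measure_empty
    · intro s hs
      rw [integral_map hSm.aemeasurable (by apply Measurable.aestronglyMeasurable; fun_prop),
        integral_map hgm.aemeasurable (by apply Measurable.aestronglyMeasurable; fun_prop)]
      have hprod : ∀ x : Fin k → ℝ,
          exp (-(s * S x)) = ∏ i, exp (-(s * (α i^2 * σ i / (x i)^2))) := by
        intro x
        rw [← Real.exp_sum]
        congr 1
        rw [hS_def]
        simp only [Finset.mul_sum, ← Finset.sum_neg_distrib]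
      simp_rw [hprod]
      rw [pi_prod_integral (fun i => gaussianReal 0 (σ i).toNNReal)
        (fun i y => exp (-(s * (α i^2 * σ i / y^2))))]
      rw [Finset.prod_congr rfl (fun i _ => laplace_var (hα i) (hσ i) hs), ← Real.exp_sum]
      have hrhs : ∀ z : ℝ, exp (-(s * g z)) = exp (-(s * (A^2/z^2))) := fun z => rfl
      simp_rw [hrhs]
      rw [laplace_std hA hs]
      congr 1
      rw [Finset.sum_neg_distrib, hA_def, Finset.sum_mul]
  calc P.map (fun x => (S x)⁻¹)
      = (P.map S).map (fun t => t⁻¹) := (Measure.map_map measurable_inv hSm).symm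
    _ = ((gaussianReal 0 1).map g).map (fun t => t⁻¹) := by rw [hmap]
    _ = (gaussianReal 0 1).map ((fun t => t⁻¹) ∘ g) := Measure.map_map measurable_inv hgm
    _ = (gaussianReal 0 1).map (fun z => z ^ 2 / A ^ 2) := by
        congr 1
        funext z
        show (A^2/z^2)⁻¹ = z^2/A^2
        rw [inv_div]
end
end

section
/- Let f(x) = xᵀAx be a quadratic form given by a nonzero symmetric k×k matrix A, and let Σ be a positive definite k×k matrix. If λ₁,…,λ_k are the eigenvalues of AΣ, then W_{f,Σ} has the same distribution as (λ₁Z₁² + ··· + λ_kZ_k²)² / (4(λ₁²Z₁² + ··· + λ_k²Z_k²)), where Z₁,…,Z_k are independent standard normal random variables. -/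
open MeasureTheory ProbabilityTheory Matrix MvPolynomial Real

noncomputable section

/-- The quadratic form `x ↦ xᵀ A x` as a polynomial. -/
def quadFormPoly {ι : Type*} [Fintype ι] (A : Matrix ι ι ℝ) : MvPolynomial ι ℝ :=
  ∑ i, ∑ j, C (A i j) * X i * X j

/-! ### Auxiliary lemmas: characteristic polynomials -/

lemma my_charpoly_conj {n : Type*} [Fintype n] [DecidableEq n] (P M Q : Matrix n n ℝ)
    (hPQ : P * Q = 1) : (P * M * Q).charpoly = M.charpoly := by
  have hmap : ∀ N : Matrix n n ℝ, (Polynomial.C (R := ℝ)).mapMatrix N = N.map Polynomial.C :=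
    fun _ => rfl
  have key : charmatrix (P * M * Q) =
      (P.map Polynomial.C) * charmatrix M * (Q.map Polynomial.C) := by
    have hPQ' : (P.map Polynomial.C) * (Q.map Polynomial.C) = 1 := by
      rw [← hmap, ← hmap, ← _root_.map_mul, hPQ, _root_.map_one]
    unfold charmatrix
    rw [_root_.map_mul, _root_.map_mul, hmap, hmap, hmap]
    rw [mul_sub, sub_mul]
    congr 1
    rw [mul_assoc, (Matrix.scalar_commute (Polynomial.X (R := ℝ))
      (fun r' => Commute.all _ _) (Q.map Polynomial.C)).eq, ← mul_assoc, hPQ', one_mul]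
  have hdet : (P.map Polynomial.C).det * (Q.map Polynomial.C).det = 1 := by
    rw [← Matrix.det_mul, ← hmap, ← hmap, ← _root_.map_mul, hPQ, _root_.map_one, Matrix.det_one]
  unfold Matrix.charpoly
  rw [key, Matrix.det_mul, Matrix.det_mul]
  calc (P.map Polynomial.C).det * (charmatrix M).det * (Q.map Polynomial.C).det
      = (charmatrix M).det * ((P.map Polynomial.C).det * (Q.map Polynomial.C).det) := by ring
    _ = (charmatrix M).det := by rw [hdet, mul_one]

lemma my_charpoly_diagonal {n : Type*} [Fintype n] [DecidableEq n] (d : n → ℝ) :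
    (Matrix.diagonal d).charpoly = ∏ i, (Polynomial.X - Polynomial.C (d i)) := by
  have : charmatrix (Matrix.diagonal d) =
      Matrix.diagonal (fun i => Polynomial.X - Polynomial.C (d i)) := by
    ext i j
    by_cases h : i = j
    · subst h; rw [charmatrix_apply_eq, Matrix.diagonal_apply_eq, Matrix.diagonal_apply_eq]
    · rw [charmatrix_apply_ne _ _ _ h, Matrix.diagonal_apply_ne _ h,
        Matrix.diagonal_apply_ne _ h, map_zero, neg_zero]
  rw [Matrix.charpoly, this, Matrix.det_diagonal]

lemma my_exists_perm {k : ℕ} {f g : Fin k → ℝ}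
    (h : ∏ i, (Polynomial.X - Polynomial.C (f i)) = ∏ i, (Polynomial.X - Polynomial.C (g i))) :
    ∃ σ : Equiv.Perm (Fin k), f = g ∘ σ := by
  have hms : Multiset.map f Finset.univ.val = Multiset.map g Finset.univ.val := by
    have hf := Polynomial.roots_multiset_prod_X_sub_C (Multiset.map f Finset.univ.val)
    have hg := Polynomial.roots_multiset_prod_X_sub_C (Multiset.map g Finset.univ.val)
    rw [← hf, ← hg]
    congr 1
    rw [Multiset.map_map, Multiset.map_map]
    simpa [Finset.prod] using h
  have hperm : ∀ (h : Fin k → ℝ) (σ : Equiv.Perm (Fin k)),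
      Multiset.map (h ∘ σ) Finset.univ.val = Multiset.map h Finset.univ.val := by
    intro h σ
    have : Multiset.map σ Finset.univ.val = Finset.univ.val := by
      have := Finset.map_univ_equiv σ
      calc Multiset.map σ Finset.univ.val = (Finset.map σ.toEmbedding Finset.univ).val := rfl
        _ = Finset.univ.val := by rw [this]
    conv_rhs => rw [← this]
    rw [Multiset.map_map]
  have hofn : ∀ h : Fin k → ℝ,
      Multiset.map h Finset.univ.val = (List.ofFn h : Multiset ℝ) := by
    intro h
    rw [Fin.univ_def]
    simp [List.ofFn_eq_map]
  set σf := Tuple.sort f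
  set σg := Tuple.sort g
  have hsorted : f ∘ σf = g ∘ σg := by
    apply List.ofFn_injective
    refine List.Perm.eq_of_sortedLE (Tuple.monotone_sort f).sortedLE_ofFn
      (Tuple.monotone_sort g).sortedLE_ofFn ?_
    · rw [← Multiset.coe_eq_coe, ← hofn, ← hofn, hperm, hperm, hms]
  refine ⟨σf.symm.trans σg, ?_⟩
  funext i
  have := congrFun hsorted (σf.symm i)
  simpa using this

/-! ### Auxiliary lemmas: measure theory -/

lemma my_lintegral_fin_prod {n : ℕ} (f : Fin n → ℝ → ENNReal) (hf : ∀ i, Measurable (f i)) :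
    ∫⁻ x : Fin n → ℝ, ∏ i, f i (x i) = ∏ i, ∫⁻ t, f i t := by
  induction n with
  | zero => simp [volume_pi]
  | succ n n_ih =>
    have hmp := (measurePreserving_piFinSuccAbove
      (fun _ : Fin (n + 1) => (volume : Measure ℝ)) 0).symm
    have hG : Measurable fun x : Fin (n + 1) → ℝ => ∏ i, f i (x i) :=
      Finset.measurable_prod _ fun i _ => (hf i).comp (measurable_pi_apply i)
    rw [volume_pi, ← hmp.lintegral_comp hG]
    simp only [MeasurableEquiv.piFinSuccAbove_symm_apply, Fin.insertNthEquiv,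
      Fin.prod_univ_succ, Fin.insertNth_zero, Equiv.coe_fn_mk, cast_eq, Function.comp_def,
      Fin.zero_succAbove, Fin.cons_zero, Fin.cons_succ]
    have hpm := lintegral_prod_mul (μ := (volume : Measure ℝ))
      (ν := Measure.pi fun _ : Fin n => (volume : Measure ℝ))
      (f := f 0) (g := fun y : Fin n → ℝ => ∏ i : Fin n, f i.succ (y i))
      (hf 0).aemeasurable
      ((Finset.measurable_prod _ fun i _ => (hf i.succ).comp (measurable_pi_apply i)).aemeasurable)
    rw [hpm]
    rw [← volume_pi, n_ih (fun i => f i.succ) (fun i => hf i.succ)]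

lemma my_stdGaussian_eq (k : ℕ) :
    stdGaussian (Fin k) =
      (volume : Measure (Fin k → ℝ)).withDensity fun x => ∏ i, gaussianPDF 0 1 (x i) := by
  apply Measure.pi_eq
  intro s hs
  rw [withDensity_apply _ (MeasurableSet.univ_pi hs),
    ← lintegral_indicator (MeasurableSet.univ_pi hs)]
  have hind : (Set.univ.pi s).indicator (fun x => ∏ i, gaussianPDF 0 1 (x i)) =
      fun x => ∏ i, (s i).indicator (gaussianPDF 0 1) (x i) := by
    funext x
    by_cases hx : x ∈ Set.univ.pi s
    · rw [Set.indicator_of_mem hx]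
      exact Finset.prod_congr rfl fun i _ =>
        (Set.indicator_of_mem (hx i (Set.mem_univ i)) _).symm
    · rw [Set.indicator_of_notMem hx]
      simp only [Set.mem_pi, Set.mem_univ, forall_true_left] at hx
      push_neg at hx
      obtain ⟨j, hj⟩ := hx
      exact (Finset.prod_eq_zero (Finset.mem_univ j) (Set.indicator_of_notMem hj _)).symm
  rw [hind, my_lintegral_fin_prod _ (fun i => (measurable_gaussianPDF 0 1).indicator (hs i))]
  refine Finset.prod_congr rfl fun i _ => ?_
  rw [lintegral_indicator (hs i), gaussianReal_of_var_ne_zero 0 one_ne_zero,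
    withDensity_apply _ (hs i)]

lemma my_measurable_mulVec {k : ℕ} (M : Matrix (Fin k) (Fin k) ℝ) :
    Measurable M.mulVec := by
  apply measurable_pi_lambda
  intro i
  simp only [Matrix.mulVec, dotProduct]
  exact Finset.measurable_sum _ fun j _ => (by fun_prop : Measurable fun c : Fin k → ℝ => M i j * c j)

lemma my_map_withDensity {k : ℕ} (e : (Fin k → ℝ) ≃ᵐ (Fin k → ℝ))
    (μ : Measure (Fin k → ℝ)) (ρ : (Fin k → ℝ) → ENNReal) (hρ : Measurable ρ) :
    (μ.withDensity (ρ ∘ e)).map e = (μ.map e).withDensity ρ := by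
  ext s hs
  rw [Measure.map_apply e.measurable hs, withDensity_apply _ (e.measurable hs),
    withDensity_apply _ hs, setLIntegral_map hs hρ e.measurable]
  rfl

lemma my_stdGaussian_map_orth {k : ℕ} (U : Matrix (Fin k) (Fin k) ℝ)
    (h1 : U * Uᵀ = 1) (h2 : Uᵀ * U = 1) :
    (stdGaussian (Fin k)).map U.mulVec = stdGaussian (Fin k) := by
  have hdet : U.det * U.det = 1 := by
    have := congrArg Matrix.det h1
    rwa [Matrix.det_mul, Matrix.det_transpose, Matrix.det_one] at this
  have habs : |U.det⁻¹| = 1 := by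
    have h0 : |U.det| * |U.det| = 1 := by rw [← abs_mul, hdet, abs_one]
    have : |U.det| = 1 := by nlinarith [abs_nonneg U.det]
    rw [abs_inv, this]; norm_num
  have hdet0 : U.det ≠ 0 := by
    intro h; rw [h, mul_zero] at hdet; exact zero_ne_one hdet
  set ρ : (Fin k → ℝ) → ENNReal := fun x => ∏ i, gaussianPDF 0 1 (x i) with hρdef
  have hρm : Measurable ρ :=
    Finset.measurable_prod _ fun i _ => (measurable_gaussianPDF 0 1).comp (measurable_pi_apply i)
  set e : (Fin k → ℝ) ≃ᵐ (Fin k → ℝ) :=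
    { toFun := U.mulVec
      invFun := Uᵀ.mulVec
      left_inv := fun x => by rw [Matrix.mulVec_mulVec, h2, Matrix.one_mulVec]
      right_inv := fun x => by rw [Matrix.mulVec_mulVec, h1, Matrix.one_mulVec]
      measurable_toFun := my_measurable_mulVec U
      measurable_invFun := my_measurable_mulVec Uᵀ } with he
  have hsum : ∀ x, ∑ i, (U.mulVec x i) ^ 2 = ∑ i, (x i) ^ 2 := by
    intro x
    have hd : ∀ v : Fin k → ℝ, ∑ i, v i ^ 2 = v ⬝ᵥ v := by
      intro v; simp [dotProduct, sq]
    rw [hd, hd]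
    calc (U.mulVec x) ⬝ᵥ (U.mulVec x) = (U.mulVec x) ⬝ᵥ (U *ᵥ x) := rfl
      _ = ((U *ᵥ x) ᵥ* U) ⬝ᵥ x := Matrix.dotProduct_mulVec _ _ _
      _ = (Uᵀ *ᵥ (U *ᵥ x)) ⬝ᵥ x := by rw [Matrix.mulVec_transpose]
      _ = x ⬝ᵥ x := by rw [Matrix.mulVec_mulVec, h2, Matrix.one_mulVec]
  have hρinv : ρ ∘ U.mulVec = ρ := by
    funext x
    have key : ∀ v : Fin k → ℝ, ρ v =
        ENNReal.ofReal ((Real.sqrt (2 * π))⁻¹ ^ k * Real.exp (-(∑ i, (v i) ^ 2) / 2)) := by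
      intro v
      rw [hρdef]
      simp only [gaussianPDF_def]
      rw [← ENNReal.ofReal_prod_of_nonneg (fun i _ => gaussianPDFReal_nonneg 0 1 (v i))]
      congr 1
      simp only [gaussianPDFReal, NNReal.coe_one, mul_one, sub_zero]
      rw [Finset.prod_mul_distrib, Finset.prod_const, ← Real.exp_sum,
        Finset.card_univ, Fintype.card_fin]
      congr 1
      rw [neg_div, Finset.sum_div, ← Finset.sum_neg_distrib]
      exact congrArg rexp (Finset.sum_congr rfl fun i _ => by ring)
    show ρ (U.mulVec x) = ρ x
    rw [key, key, hsum]
  have hvol : Measure.map U.mulVec (volume : Measure (Fin k → ℝ)) = volume := by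
    have := Real.map_matrix_volume_pi_eq_smul_volume_pi hdet0
    have hcoe : ⇑(Matrix.toLin' U) = U.mulVec := by
      funext v; rw [Matrix.toLin'_apply]
    rw [hcoe] at this
    rw [this, habs]
    simp
  have hce : ⇑e = U.mulVec := rfl
  have hh := my_map_withDensity e volume ρ hρm
  rw [hce, hρinv] at hh
  rw [my_stdGaussian_eq, ← hρdef, hh, hvol]

/-! ### Auxiliary lemmas: quadratic forms -/

lemma my_dot_eq {k : ℕ} (B : Matrix (Fin k) (Fin k) ℝ) (v y : Fin k → ℝ) :
    (B *ᵥ v) ⬝ᵥ y = v ⬝ᵥ (Bᵀ *ᵥ y) := by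
  rw [Matrix.dotProduct_mulVec, Matrix.vecMul_transpose]

lemma my_eval_quadForm {k : ℕ} (A : Matrix (Fin k) (Fin k) ℝ) (x : Fin k → ℝ) :
    eval x (quadFormPoly A) = x ⬝ᵥ (A *ᵥ x) := by
  unfold quadFormPoly
  simp only [map_sum, eval_mul, eval_C, eval_X]
  simp only [dotProduct, Matrix.mulVec, Finset.mul_sum]
  exact Finset.sum_congr rfl fun i _ => Finset.sum_congr rfl fun j _ => by ring

lemma my_polyGrad_quadForm {k : ℕ} (A : Matrix (Fin k) (Fin k) ℝ) (hA : A.IsSymm)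
    (x : Fin k → ℝ) :
    polyGrad (quadFormPoly A) x = fun l => 2 * (A *ᵥ x) l := by
  funext l
  unfold polyGrad quadFormPoly
  simp only [map_sum, pderiv_mul, pderiv_C, pderiv_X, zero_mul, add_zero, zero_add,
    eval_add, eval_mul, eval_C, eval_X, Pi.single_apply]
  simp only [apply_ite (MvPolynomial.eval x), _root_.map_one, _root_.map_zero, mul_ite, mul_one,
    mul_zero, ite_mul, zero_mul]
  rw [show (∑ i : Fin k, ∑ j : Fin k,
      ((if i = l then A i j * x j else 0) +
        if j = l then A i j * x i else 0)) =
      (∑ i : Fin k, ∑ j : Fin k, (if i = l then A i j * x j else 0)) +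
      (∑ i : Fin k, ∑ j : Fin k, (if j = l then A i j * x i else 0)) by
    rw [← Finset.sum_add_distrib]
    exact Finset.sum_congr rfl fun i _ => by rw [← Finset.sum_add_distrib]]
  have h1 : (∑ i : Fin k, ∑ j : Fin k, (if i = l then A i j * x j else 0)) = (A *ᵥ x) l := by
    have hin : ∀ i : Fin k, ∑ j : Fin k, (if i = l then A i j * x j else 0) =
        if i = l then (A *ᵥ x) i else 0 := by
      intro i
      by_cases h : i = l <;> simp [h, Matrix.mulVec, dotProduct]
    simp [hin, Finset.sum_ite_eq]
  have h2 : (∑ i : Fin k, ∑ j : Fin k, (if j = l then A i j * x i else 0)) = (A *ᵥ x) l := by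
    have hin : ∀ i : Fin k, ∑ j : Fin k, (if j = l then A i j * x i else 0) = A i l * x i := by
      intro i; simp [Finset.sum_ite_eq']
    simp only [hin]
    have hAt : ∀ i, A i l = A l i := fun i => by
      conv_lhs => rw [← hA]
      rfl
    simp only [hAt]
    simp [Matrix.mulVec, dotProduct]
  rw [h1, h2]
  ring

lemma my_waldRV_eq {k : ℕ} (A : Matrix (Fin k) (Fin k) ℝ) (hA : A.IsSymm)
    (S : Matrix (Fin k) (Fin k) ℝ) (x : Fin k → ℝ) :
    waldRV (quadFormPoly A) S x =
      (x ⬝ᵥ (A *ᵥ x)) ^ 2 / (4 * ((A *ᵥ x) ⬝ᵥ (S *ᵥ (A *ᵥ x)))) := by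
  unfold waldRV
  rw [my_eval_quadForm, my_polyGrad_quadForm A hA]
  congr 1
  set y := A *ᵥ x with hy
  have h2 : (fun l => 2 * y l) = (2 : ℝ) • y := by funext l; simp
  rw [h2, Matrix.mulVec_smul, smul_dotProduct, dotProduct_smul]
  simp only [smul_eq_mul]
  ring

/-! ### Main theorem -/

/-- Let `f(x) = xᵀAx` be a quadratic form given by a nonzero symmetric matrix
`A` and let `Σ` be positive definite.  If `λ₁, …, λ_k` are the eigenvalues of `AΣ` (i.e.,
the characteristic polynomial of `AΣ` is `∏ᵢ (X - λᵢ)`), then `W_{f,Σ}` has the same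
distribution as `(∑ᵢ λᵢ Zᵢ²)² / (4 ∑ᵢ λᵢ² Zᵢ²)` for independent standard normals `Zᵢ`. -/
theorem waldRV_quadratic_canonical {k : ℕ}
    (A : Matrix (Fin k) (Fin k) ℝ) (hA : A.IsSymm) (hA0 : A ≠ 0)
    (S : Matrix (Fin k) (Fin k) ℝ) (hS : S.PosDef)
    (μ : Measure (Fin k → ℝ)) (hμ : IsCenteredGaussian μ S)
    (lam : Fin k → ℝ)
    (hlam : (A * S).charpoly = ∏ i, (Polynomial.X - Polynomial.C (lam i))) :
    μ.map (waldRV (quadFormPoly A) S) =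
      (stdGaussian (Fin k)).map
        (fun z => (∑ i, lam i * z i ^ 2) ^ 2 / (4 * ∑ i, lam i ^ 2 * z i ^ 2)) := by
  obtain ⟨B, hB, hμB⟩ := hμ
  -- B is invertible
  have hdetS : S.det ≠ 0 := ne_of_gt hS.det_pos
  have hdetB : B.det ≠ 0 := by
    intro h
    rw [← hB, Matrix.det_mul, h, zero_mul] at hdetS
    exact hdetS rfl
  -- the symmetric matrix M = Bᵀ A B
  set M : Matrix (Fin k) (Fin k) ℝ := Bᵀ * A * B with hM
  have hMsymm : Mᵀ = M := by
    rw [hM, Matrix.transpose_mul, Matrix.transpose_mul, Matrix.transpose_transpose, hA.eq,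
      mul_assoc]
  have hMherm : M.IsHermitian := by
    show Mᴴ = M
    rw [Matrix.conjTranspose]
    have : M.map (star : ℝ → ℝ) = M := by
      ext i j; simp
    rw [show Mᵀ.map (star : ℝ → ℝ) = (M.map (star : ℝ → ℝ))ᵀ from rfl, this, hMsymm]
  set eig : Fin k → ℝ := hMherm.eigenvalues with heig
  set V : Matrix (Fin k) (Fin k) ℝ := (hMherm.eigenvectorUnitary : Matrix (Fin k) (Fin k) ℝ)
    with hV
  have hstarV : star V = Vᵀ := by
    show Vᴴ = Vᵀ
    rw [Matrix.conjTranspose]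
    have : V.map (star : ℝ → ℝ) = V := by ext i j; simp
    rw [show Vᵀ.map (star : ℝ → ℝ) = (V.map (star : ℝ → ℝ))ᵀ from rfl, this]
  have hVVt : V * Vᵀ = 1 := by
    rw [← hstarV]
    exact (Matrix.mem_unitaryGroup_iff).mp hMherm.eigenvectorUnitary.2
  have hVtV : Vᵀ * V = 1 := mul_eq_one_comm.mp hVVt
  have hofReal : (RCLike.ofReal : ℝ → ℝ) ∘ eig = eig := by
    funext i; simp
  have hspec : M = V * Matrix.diagonal eig * Vᵀ := by
    have := hMherm.spectral_theorem
    rwa [Unitary.conjStarAlgAut_apply, ← hV, hstarV, hofReal] at this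
  -- charpoly computations
  have hcpM : M.charpoly = (A * S).charpoly := by
    have hBt : Bᵀ * (Bᵀ)⁻¹ = 1 :=
      Matrix.mul_nonsing_inv _ (isUnit_iff_ne_zero.mpr (by rwa [Matrix.det_transpose]))
    have hMconj : M = Bᵀ * (A * S) * (Bᵀ)⁻¹ := by
      rw [← hB]
      calc Bᵀ * A * B = (Bᵀ * A * B) * (Bᵀ * (Bᵀ)⁻¹) := by rw [hBt, mul_one]
        _ = Bᵀ * (A * (B * Bᵀ)) * (Bᵀ)⁻¹ := by noncomm_ring
    rw [hMconj]
    exact my_charpoly_conj _ _ _ hBt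
  have hcpdiag : M.charpoly = ∏ i, (Polynomial.X - Polynomial.C (eig i)) := by
    rw [hspec, my_charpoly_conj V _ Vᵀ hVVt, my_charpoly_diagonal]
  have hprod : ∏ i, (Polynomial.X - Polynomial.C (eig i)) =
      ∏ i, (Polynomial.X - Polynomial.C (lam i)) := by
    rw [← hcpdiag, hcpM, hlam]
  obtain ⟨σ, hσ⟩ := my_exists_perm hprod
  -- the permutation matrix
  set P : Matrix (Fin k) (Fin k) ℝ :=
    Matrix.of (fun i j => if j = σ i then (1 : ℝ) else 0) with hP
  have hPvec : ∀ w : Fin k → ℝ, P *ᵥ w = fun i => w (σ i) := by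
    intro w; funext i
    simp [hP, Matrix.mulVec, dotProduct, ite_mul, Finset.sum_ite_eq']
  have hPPt : P * Pᵀ = 1 := by
    ext i j
    simp only [hP, Matrix.mul_apply, Matrix.transpose_apply, Matrix.of_apply, Matrix.one_apply,
      ite_mul, one_mul, zero_mul]
    rw [Finset.sum_ite_eq' Finset.univ (σ i) (fun l => if l = σ j then (1:ℝ) else 0)]
    simp [EmbeddingLike.apply_eq_iff_eq, eq_comm]
  have hPtP : Pᵀ * P = 1 := mul_eq_one_comm.mp hPPt
  -- the orthogonal matrix U = V * P
  set U : Matrix (Fin k) (Fin k) ℝ := V * P with hU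
  have hU1 : U * Uᵀ = 1 := by
    rw [hU, Matrix.transpose_mul]
    calc V * P * (Pᵀ * Vᵀ) = V * (P * Pᵀ) * Vᵀ := by noncomm_ring
      _ = 1 := by rw [hPPt, mul_one, hVVt]
  have hU2 : Uᵀ * U = 1 := mul_eq_one_comm.mp hU1
  -- measurability
  have hWmeq : waldRV (quadFormPoly A) S =
      fun x => (x ⬝ᵥ (A *ᵥ x)) ^ 2 / (4 * ((A *ᵥ x) ⬝ᵥ (S *ᵥ (A *ᵥ x)))) :=
    funext fun x => my_waldRV_eq A hA S x
  have hdotm : ∀ C : Matrix (Fin k) (Fin k) ℝ,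
      Measurable fun v : Fin k → ℝ => v ⬝ᵥ (C *ᵥ v) := by
    intro C
    simp only [dotProduct]
    exact Finset.measurable_sum _ fun i _ =>
      (measurable_pi_apply i).mul ((measurable_pi_apply i).comp (my_measurable_mulVec C))
  have hWm : Measurable (waldRV (quadFormPoly A) S) := by
    rw [hWmeq]
    apply Measurable.div
    · exact (hdotm A).pow_const 2
    · apply Measurable.const_mul
      exact ((hdotm S).comp (my_measurable_mulVec A))
  -- the pointwise identity
  have hpoint : (waldRV (quadFormPoly A) S ∘ B.mulVec) ∘ U.mulVec =
      fun z => (∑ i, lam i * z i ^ 2) ^ 2 / (4 * ∑ i, lam i ^ 2 * z i ^ 2) := by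
    funext w
    set p : Fin k → ℝ := fun i => w (σ i) with hp
    have hUw : U *ᵥ w = V *ᵥ p := by
      rw [hU, ← Matrix.mulVec_mulVec, hPvec w]
    set z : Fin k → ℝ := U *ᵥ w with hz
    set x : Fin k → ℝ := B *ᵥ z with hx
    -- M *ᵥ z = V *ᵥ (diagonal eig *ᵥ p)
    have hMz : M *ᵥ z = V *ᵥ (Matrix.diagonal eig *ᵥ p) := by
      rw [hUw, hspec]
      rw [Matrix.mulVec_mulVec, Matrix.mulVec_mulVec]
      calc (V * Matrix.diagonal eig * Vᵀ * V) *ᵥ p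
          = (V * Matrix.diagonal eig * (Vᵀ * V)) *ᵥ p := by rw [mul_assoc]
        _ = (V * Matrix.diagonal eig) *ᵥ p := by rw [hVtV, mul_one]
    have hdiagdot : ∀ q : Fin k → ℝ, q ⬝ᵥ (Matrix.diagonal eig *ᵥ q) = ∑ i, eig i * q i ^ 2 := by
      intro q
      simp only [dotProduct, Matrix.mulVec_diagonal]
      exact Finset.sum_congr rfl fun i _ => by ring
    -- numerator
    have hnum : x ⬝ᵥ (A *ᵥ x) = ∑ i, lam i * w i ^ 2 := by
      have : x ⬝ᵥ (A *ᵥ x) = z ⬝ᵥ (M *ᵥ z) := by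
        rw [hx, my_dot_eq, Matrix.mulVec_mulVec, Matrix.mulVec_mulVec, hM, mul_assoc]
      rw [this, hMz, hUw, my_dot_eq, Matrix.mulVec_mulVec, hVtV, Matrix.one_mulVec,
        hdiagdot]
      calc ∑ i, eig i * p i ^ 2 = ∑ i, lam (σ i) * w (σ i) ^ 2 := by
            refine Finset.sum_congr rfl fun i _ => ?_
            rw [hσ]; rfl
        _ = ∑ i, lam i * w i ^ 2 := Equiv.sum_comp σ (fun j => lam j * w j ^ 2)
    -- denominator
    have hden : (A *ᵥ x) ⬝ᵥ (S *ᵥ (A *ᵥ x)) = ∑ i, lam i ^ 2 * w i ^ 2 := by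
      have hSy : ∀ y : Fin k → ℝ, y ⬝ᵥ (S *ᵥ y) = (Bᵀ *ᵥ y) ⬝ᵥ (Bᵀ *ᵥ y) := by
        intro y
        rw [← hB, ← Matrix.mulVec_mulVec, dotProduct_comm, my_dot_eq]
      have hBtAx : Bᵀ *ᵥ (A *ᵥ x) = V *ᵥ (Matrix.diagonal eig *ᵥ p) := by
        rw [hx, Matrix.mulVec_mulVec, Matrix.mulVec_mulVec, ← hM, hMz]
      rw [hSy, hBtAx, my_dot_eq, Matrix.mulVec_mulVec, hVtV, Matrix.one_mulVec]
      have : (Matrix.diagonal eig *ᵥ p) ⬝ᵥ (Matrix.diagonal eig *ᵥ p) =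
          ∑ i, eig i ^ 2 * p i ^ 2 := by
        simp only [dotProduct, Matrix.mulVec_diagonal]
        exact Finset.sum_congr rfl fun i _ => by ring
      rw [this]
      calc ∑ i, eig i ^ 2 * p i ^ 2 = ∑ i, lam (σ i) ^ 2 * w (σ i) ^ 2 := by
            refine Finset.sum_congr rfl fun i _ => ?_
            rw [hσ]; rfl
        _ = ∑ i, lam i ^ 2 * w i ^ 2 := Equiv.sum_comp σ (fun j => lam j ^ 2 * w j ^ 2)
    show waldRV (quadFormPoly A) S (B *ᵥ (U *ᵥ w)) = _
    rw [my_waldRV_eq A hA S, ← hz, ← hx, hnum, hden]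
  -- assembling
  rw [hμB, Measure.map_map hWm (my_measurable_mulVec B)]
  conv_lhs => rw [← my_stdGaussian_map_orth U hU1 hU2]
  rw [Measure.map_map (hWm.comp (my_measurable_mulVec B)) (my_measurable_mulVec U), hpoint]
end
end

section
/- If c ≥ 0 and Ψ is uniformly distributed on [0, 2π], then the random variable S_c(Ψ) := (1+c)²·cos(Ψ)²·sin(Ψ)² / (cos(Ψ)² + c²·sin(Ψ)²) has the same distribution as cos(Ψ)². -/
set_option maxHeartbeats 1000000


open MeasureTheory ProbabilityTheory Matrix MvPolynomial Real

noncomputable section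

private lemma cosL0 {t θ : ℝ} (ht : -1 ≤ t) (ht' : t ≤ 1) (h0 : 0 ≤ θ) (h2 : θ ≤ 2 * π) :
    Real.cos θ ≤ t ↔ Real.arccos t ≤ θ ∧ θ ≤ 2 * π - Real.arccos t := by
  have ha0 := Real.arccos_nonneg t
  have hapi := Real.arccos_le_pi t
  have hct : Real.cos (Real.arccos t) = t := Real.cos_arccos ht ht'
  constructor
  · intro h
    rcases le_total θ π with hθ | hθ
    · refine ⟨?_, by linarith⟩
      by_contra hlt
      push_neg at hlt
      have := Real.strictAntiOn_cos ⟨h0, hθ⟩ ⟨ha0, hapi⟩ hlt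
      linarith
    · refine ⟨by linarith, ?_⟩
      by_contra hlt
      push_neg at hlt
      have h1 : 2 * π - θ < Real.arccos t := by linarith
      have := Real.strictAntiOn_cos ⟨by linarith, by linarith⟩ ⟨ha0, hapi⟩ h1
      rw [Real.cos_two_pi_sub] at this
      linarith
  · rintro ⟨h1, h2'⟩
    rcases le_total θ π with hθ | hθ
    · have := Real.cos_le_cos_of_nonneg_of_le_pi ha0 hθ h1
      linarith
    · have := Real.cos_le_cos_of_nonneg_of_le_pi ha0 (by linarith : 2 * π - θ ≤ π)
        (by linarith)
      rw [Real.cos_two_pi_sub] at this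
      linarith

private lemma cosL0' {t θ : ℝ} (ht : -1 ≤ t) (ht' : t ≤ 1) (h0 : 0 ≤ θ) (h2 : θ ≤ 2 * π) :
    t ≤ Real.cos θ ↔ θ ≤ Real.arccos t ∨ 2 * π - Real.arccos t ≤ θ := by
  have ha0 := Real.arccos_nonneg t
  have hapi := Real.arccos_le_pi t
  have hct : Real.cos (Real.arccos t) = t := Real.cos_arccos ht ht'
  constructor
  · intro h
    rcases le_total θ π with hθ | hθ
    · left
      by_contra hlt
      push_neg at hlt
      have := Real.strictAntiOn_cos ⟨ha0, hapi⟩ ⟨h0, hθ⟩ hlt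
      linarith
    · right
      by_contra hlt
      push_neg at hlt
      have h1 : Real.arccos t < 2 * π - θ := by linarith
      have := Real.strictAntiOn_cos ⟨ha0, hapi⟩ ⟨by linarith, by linarith⟩ h1
      rw [Real.cos_two_pi_sub] at this
      linarith
  · rintro (h1 | h1)
    · have := Real.cos_le_cos_of_nonneg_of_le_pi h0 hapi h1
      linarith
    · have := Real.cos_le_cos_of_nonneg_of_le_pi (by linarith : (0:ℝ) ≤ 2 * π - θ)
        hapi (by linarith)
      rw [Real.cos_two_pi_sub] at this
      linarith

private lemma cosL1 {t : ℝ} (ht : -1 ≤ t) (ht' : t ≤ 1) :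
    Set.Icc 0 (2 * π) ∩ {ψ : ℝ | Real.cos (2 * ψ) ≤ t} =
      Set.Icc (Real.arccos t / 2) (π - Real.arccos t / 2) ∪
        Set.Icc (π + Real.arccos t / 2) (2 * π - Real.arccos t / 2) := by
  have ha0 := Real.arccos_nonneg t
  have hapi := Real.arccos_le_pi t
  have hπ := Real.pi_pos
  ext ψ
  simp only [Set.mem_inter_iff, Set.mem_Icc, Set.mem_setOf_eq, Set.mem_union]
  constructor
  · rintro ⟨⟨h0, h2⟩, hcos⟩
    rcases le_total ψ π with hψ | hψ
    · left
      have := (cosL0 ht ht' (by linarith : (0:ℝ) ≤ 2 * ψ) (by linarith)).mp hcos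
      constructor <;> linarith [this.1, this.2]
    · right
      have hc : Real.cos (2 * ψ - 2 * π) ≤ t := by rwa [Real.cos_sub_two_pi]
      have := (cosL0 ht ht' (by linarith : (0:ℝ) ≤ 2 * ψ - 2 * π) (by linarith)).mp hc
      constructor <;> linarith [this.1, this.2]
  · rintro (⟨h1, h2⟩ | ⟨h1, h2⟩)
    · refine ⟨⟨by linarith, by linarith⟩, ?_⟩
      exact (cosL0 ht ht' (by linarith : (0:ℝ) ≤ 2 * ψ) (by linarith)).mpr
        ⟨by linarith, by linarith⟩
    · refine ⟨⟨by linarith, by linarith⟩, ?_⟩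
      have := (cosL0 ht ht' (by linarith : (0:ℝ) ≤ 2 * ψ - 2 * π) (by linarith)).mpr
        ⟨by linarith, by linarith⟩
      rwa [Real.cos_sub_two_pi] at this

private lemma cosL2 {t : ℝ} (ht : -1 ≤ t) (ht' : t ≤ 1) :
    Set.Icc 0 (2 * π) ∩ {ψ : ℝ | t ≤ Real.cos (2 * ψ)} =
      Set.Icc 0 (Real.arccos t / 2) ∪
        Set.Icc (π - Real.arccos t / 2) (π + Real.arccos t / 2) ∪
        Set.Icc (2 * π - Real.arccos t / 2) (2 * π) := by
  have ha0 := Real.arccos_nonneg t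
  have hapi := Real.arccos_le_pi t
  have hπ := Real.pi_pos
  ext ψ
  simp only [Set.mem_inter_iff, Set.mem_Icc, Set.mem_setOf_eq, Set.mem_union]
  constructor
  · rintro ⟨⟨h0, h2⟩, hcos⟩
    rcases le_total ψ π with hψ | hψ
    · have := (cosL0' ht ht' (by linarith : (0:ℝ) ≤ 2 * ψ) (by linarith)).mp hcos
      rcases this with h | h
      · exact Or.inl (Or.inl ⟨by linarith, by linarith⟩)
      · exact Or.inl (Or.inr ⟨by linarith, by linarith⟩)
    · have hc : t ≤ Real.cos (2 * ψ - 2 * π) := by rwa [Real.cos_sub_two_pi]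
      have := (cosL0' ht ht' (by linarith : (0:ℝ) ≤ 2 * ψ - 2 * π) (by linarith)).mp hc
      rcases this with h | h
      · exact Or.inl (Or.inr ⟨by linarith, by linarith⟩)
      · exact Or.inr ⟨by linarith, by linarith⟩
  · rintro ((⟨h1, h2⟩ | ⟨h1, h2⟩) | ⟨h1, h2⟩)
    · refine ⟨⟨by linarith, by linarith⟩, ?_⟩
      exact (cosL0' ht ht' (by linarith : (0:ℝ) ≤ 2 * ψ) (by linarith)).mpr
        (Or.inl (by linarith))
    · refine ⟨⟨by linarith, by linarith⟩, ?_⟩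
      rcases le_total ψ π with hψ | hψ
      · exact (cosL0' ht ht' (by linarith : (0:ℝ) ≤ 2 * ψ) (by linarith)).mpr
          (Or.inr (by linarith))
      · have := (cosL0' ht ht' (by linarith : (0:ℝ) ≤ 2 * ψ - 2 * π) (by linarith)).mpr
          (Or.inl (by linarith))
        rwa [Real.cos_sub_two_pi] at this
    · refine ⟨⟨by linarith, by linarith⟩, ?_⟩
      have := (cosL0' ht ht' (by linarith : (0:ℝ) ≤ 2 * ψ - 2 * π) (by linarith)).mpr
        (Or.inr (by linarith))
      rwa [Real.cos_sub_two_pi] at this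

private lemma IccDisj {a b c d : ℝ} (h : b < c) : Disjoint (Set.Icc a b) (Set.Icc c d) := by
  refine Set.disjoint_left.mpr ?_
  intro x hx hy
  simp only [Set.mem_Icc] at hx hy
  linarith [hx.2, hy.1]

open scoped ProbabilityTheory in
/-- If `c ≥ 0` and `Ψ` is uniformly distributed on `[0, 2π]`, then
`S_c(Ψ) = (1+c)² cos(Ψ)² sin(Ψ)² / (cos(Ψ)² + c² sin(Ψ)²)` has the same distribution as
`cos(Ψ)²`.  Here the uniform distribution on `[0, 2π]` is the normalized restriction of
Lebesgue measure. -/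
theorem trig_ratio_distribution (c : ℝ) (hc : 0 ≤ c) :
    (volume[|Set.Icc (0 : ℝ) (2 * Real.pi)]).map
        (fun ψ => (1 + c) ^ 2 * Real.cos ψ ^ 2 * Real.sin ψ ^ 2 /
          (Real.cos ψ ^ 2 + c ^ 2 * Real.sin ψ ^ 2)) =
      (volume[|Set.Icc (0 : ℝ) (2 * Real.pi)]).map (fun ψ => Real.cos ψ ^ 2) := by
  have hπ := Real.pi_pos
  have hI : MeasurableSet (Set.Icc (0:ℝ) (2 * π)) := measurableSet_Icc
  have hf : Measurable (fun ψ : ℝ => (1 + c) ^ 2 * Real.cos ψ ^ 2 * Real.sin ψ ^ 2 /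
      (Real.cos ψ ^ 2 + c ^ 2 * Real.sin ψ ^ 2)) := by
    apply Measurable.div <;> fun_prop
  have hg : Measurable (fun ψ : ℝ => Real.cos ψ ^ 2) := by fun_prop
  have hvol0 : volume (Set.Icc (0:ℝ) (2 * π)) ≠ 0 := by
    rw [Real.volume_Icc]
    simp only [ne_eq, ENNReal.ofReal_eq_zero, not_le]
    linarith
  have hvoltop : volume (Set.Icc (0:ℝ) (2 * π)) ≠ ⊤ := by
    rw [Real.volume_Icc]; exact ENNReal.ofReal_ne_top
  haveI hprob : IsProbabilityMeasure (volume[|Set.Icc (0:ℝ) (2 * π)]) :=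
    ProbabilityTheory.cond_isProbabilityMeasure_of_finite hvol0 hvoltop
  haveI : IsProbabilityMeasure ((volume[|Set.Icc (0:ℝ) (2 * π)]).map
      (fun ψ : ℝ => (1 + c) ^ 2 * Real.cos ψ ^ 2 * Real.sin ψ ^ 2 /
      (Real.cos ψ ^ 2 + c ^ 2 * Real.sin ψ ^ 2))) := Measure.isProbabilityMeasure_map hf.aemeasurable
  refine MeasureTheory.Measure.ext_of_Iic _ _ (fun x => ?_)
  rw [Measure.map_apply hf measurableSet_Iic, Measure.map_apply hg measurableSet_Iic,
    ProbabilityTheory.cond_apply hI, ProbabilityTheory.cond_apply hI]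
  congr 1
  rcases lt_or_ge x 0 with hx0 | hx0
  · -- x < 0 : both sets empty
    have e1 : Set.Icc (0:ℝ) (2 * π) ∩ (fun ψ : ℝ => (1 + c) ^ 2 * Real.cos ψ ^ 2 *
        Real.sin ψ ^ 2 / (Real.cos ψ ^ 2 + c ^ 2 * Real.sin ψ ^ 2)) ⁻¹' Set.Iic x = ∅ := by
      ext ψ
      simp only [Set.mem_inter_iff, Set.mem_preimage, Set.mem_Iic, Set.mem_empty_iff_false,
        iff_false, not_and]
      intro _ hle
      have h0 : (0:ℝ) ≤ (1 + c) ^ 2 * Real.cos ψ ^ 2 * Real.sin ψ ^ 2 /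
          (Real.cos ψ ^ 2 + c ^ 2 * Real.sin ψ ^ 2) := by positivity
      linarith
    have e2 : Set.Icc (0:ℝ) (2 * π) ∩ (fun ψ : ℝ => Real.cos ψ ^ 2) ⁻¹' Set.Iic x = ∅ := by
      ext ψ
      simp only [Set.mem_inter_iff, Set.mem_preimage, Set.mem_Iic, Set.mem_empty_iff_false,
        iff_false, not_and]
      intro _ hle
      nlinarith [sq_nonneg (Real.cos ψ)]
    rw [e1, e2]
  rcases lt_or_ge x 1 with hx1 | hx1
  · -- main case 0 ≤ x < 1
    -- algebra
    set p : ℝ := (1+c)^2 with hp_def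
    set d : ℝ := 1 - c^2 with hd_def
    set R : ℝ := Real.sqrt ((1-x)*(p^2 - x*d^2)) with hR_def
    have hp : 0 < p := by positivity
    have hpd2 : d^2 ≤ p^2 := by
      nlinarith [sq_nonneg c, sq_nonneg (1-c), sq_nonneg (1+c), mul_nonneg hc hc]
    have hin : 0 < (1-x)*(p^2 - x*d^2) := by
      have h2 : x*d^2 < p^2 := by
        nlinarith [mul_le_mul_of_nonneg_left hpd2 hx0,
          mul_pos (by linarith : (0:ℝ) < 1-x) (by positivity : (0:ℝ) < p^2)]
      nlinarith
    have hR2 : R^2 = (1-x)*(p^2 - x*d^2) := Real.sq_sqrt hin.le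
    have hR0 : 0 < R := Real.sqrt_pos.mpr hin
    set ym : ℝ := (-(x*d) - R)/p with hym_def
    set yp : ℝ := (-(x*d) + R)/p with hyp_def
    have hfac : ∀ y : ℝ, 2*x*((1+c^2) + (1-c^2)*y) - (1+c)^2*(1-y^2) = p*(y-ym)*(y-yp) := by
      intro y
      rw [hym_def, hyp_def]
      field_simp
      linear_combination hR2
    have hpm : 0 ≤ p - x*d := by nlinarith [mul_nonneg hx0 (sq_nonneg c)]
    have hpm' : 0 ≤ p + x*d := by nlinarith [mul_nonneg hx0 (sq_nonneg c)]
    have hRle : R ≤ p - x*d := by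
      have h1 : R ≤ Real.sqrt ((p - x*d)^2) := Real.sqrt_le_sqrt (by nlinarith [sq_nonneg (p-d)])
      rwa [Real.sqrt_sq hpm] at h1
    have hRle' : R ≤ p + x*d := by
      have h1 : R ≤ Real.sqrt ((p + x*d)^2) := Real.sqrt_le_sqrt (by nlinarith [sq_nonneg (p+d)])
      rwa [Real.sqrt_sq hpm'] at h1
    have hym1 : -1 ≤ ym := by rw [hym_def, le_div_iff₀ hp]; linarith
    have hyp1 : yp ≤ 1 := by rw [hyp_def, div_le_one hp]; linarith
    have hymyp : ym < yp := by
      rw [hym_def, hyp_def, div_lt_div_iff₀ hp hp]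
      nlinarith [mul_pos hR0 hp]
    have hyp2 : -1 < yp := lt_of_le_of_lt hym1 hymyp
    have hym2 : ym < 1 := lt_of_lt_of_le hymyp hyp1
    have key : (p^2 - (x*d)^2 - R^2)^2 - 4*(x*d)^2*R^2 = 16*c^2*x^2*p^2 := by
      linear_combination (R^2 + (1-x)*(p^2 - x*d^2) - 2*p^2 - 2*(x*d)^2) * hR2
    have hsq : (1 - ym^2) * (1 - yp^2) = (4*c*x/p)^2 := by
      rw [hym_def, hyp_def]
      field_simp
      linear_combination key
    have hprod : ym * yp + 4*c*x/p = 2*x - 1 := by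
      rw [hym_def, hyp_def]
      field_simp
      linear_combination (-1) * hR2
    -- arccos facts
    set a : ℝ := Real.arccos (2*x - 1) with ha_def
    set A : ℝ := Real.arccos ym with hA_def
    set B : ℝ := Real.arccos yp with hB_def
    have ha0 : 0 ≤ a := Real.arccos_nonneg _
    have hapi : a ≤ π := Real.arccos_le_pi _
    have hA0 : 0 < A := Real.arccos_pos.mpr hym2
    have hApi : A ≤ π := Real.arccos_le_pi _
    have hB0 : 0 ≤ B := Real.arccos_nonneg _
    have hBpi : B < π := by
      rcases lt_or_ge B π with h | h
      · exact h
      · exact absurd (Real.arccos_eq_pi.mp (le_antisymm (Real.arccos_le_pi _) h)) (by linarith)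
    have hBA : B < A := Real.strictAntiOn_arccos ⟨hym1, by linarith⟩ ⟨hyp2.le, hyp1⟩ hymyp
    have ha_pos : 0 < a := Real.arccos_pos.mpr (by linarith)
    -- the key angle identity a = A - B
    have hym_sq : (0:ℝ) ≤ 1 - ym^2 := by
      have h1 := mul_nonneg (by linarith : (0:ℝ) ≤ 1 - ym) (by linarith : (0:ℝ) ≤ 1 + ym)
      linarith [h1]
    have hcosAB : Real.cos (A - B) = 2*x - 1 := by
      rw [Real.cos_sub, hA_def, hB_def, Real.cos_arccos hym1 hym2.le,
        Real.cos_arccos hyp2.le hyp1, Real.sin_arccos, Real.sin_arccos,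
        ← Real.sqrt_mul hym_sq, hsq, Real.sqrt_sq (by positivity)]
      linarith [hprod]
    have haAB : a = A - B := by
      rw [ha_def, ← hcosAB, Real.arccos_cos (by linarith) (by linarith)]
    -- pointwise equivalence for f
    have hE2 : ∀ ψ : ℝ, ((1 + c) ^ 2 * Real.cos ψ ^ 2 * Real.sin ψ ^ 2 /
        (Real.cos ψ ^ 2 + c ^ 2 * Real.sin ψ ^ 2) ≤ x ↔
        (Real.cos (2*ψ) ≤ ym ∨ yp ≤ Real.cos (2*ψ))) := by
      intro ψ
      have hcs := Real.sin_sq_add_cos_sq ψ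
      have hc2 := Real.cos_two_mul ψ
      have hfy := hfac (Real.cos (2*ψ))
      have hiff2 : 0 ≤ p * (Real.cos (2*ψ) - ym) * (Real.cos (2*ψ) - yp) ↔
          (Real.cos (2*ψ) ≤ ym ∨ yp ≤ Real.cos (2*ψ)) := by
        constructor
        · intro h
          by_contra hcon
          push_neg at hcon
          have hneg := mul_pos (mul_pos hp (sub_pos.mpr hcon.1)) (sub_pos.mpr hcon.2)
          linarith [hneg]
        · rintro (h | h)
          · have := mul_nonneg (mul_nonneg hp.le
              (by linarith : (0:ℝ) ≤ ym - Real.cos (2*ψ)))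
              (by linarith : (0:ℝ) ≤ yp - Real.cos (2*ψ))
            linarith [this]
          · have := mul_nonneg (mul_nonneg hp.le
              (by linarith : (0:ℝ) ≤ Real.cos (2*ψ) - ym))
              (by linarith : (0:ℝ) ≤ Real.cos (2*ψ) - yp)
            linarith [this]
      rw [← hiff2]
      have hDy : 2*x*((1+c^2) + (1-c^2)*Real.cos (2*ψ)) =
          4*x*(Real.cos ψ ^ 2 + c^2 * Real.sin ψ ^ 2) := by
        have h : (1+c^2) + (1-c^2)*Real.cos (2*ψ) =
            2*(Real.cos ψ ^ 2 + c^2 * Real.sin ψ ^ 2) := by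
          rw [hc2]; linear_combination (-2*c^2) * hcs
        rw [h]; ring
      have hNy : 4*((1+c)^2 * Real.cos ψ ^ 2 * Real.sin ψ ^ 2) =
          (1+c)^2 * (1 - Real.cos (2*ψ)^2) := by
        rw [hc2]; linear_combination (4*(1+c)^2*Real.cos ψ ^ 2) * hcs
      rcases eq_or_lt_of_le (show (0:ℝ) ≤ Real.cos ψ ^ 2 + c^2 * Real.sin ψ ^ 2 by positivity)
        with hD | hD
      · rw [← hD, div_zero]
        have hpos1 : (0:ℝ) ≤ Real.cos ψ ^ 2 := sq_nonneg _
        have hpos2 : (0:ℝ) ≤ c^2 * Real.sin ψ ^ 2 := by positivity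
        have h1 : Real.cos ψ ^ 2 = 0 := by linarith
        have h2 : c^2 * Real.sin ψ ^ 2 = 0 := by linarith
        have hy : Real.cos (2*ψ) = -1 := by rw [hc2]; linarith
        have hs1 : Real.sin ψ ^ 2 = 1 := by linarith
        rw [hs1, mul_one] at h2
        constructor
        · intro _
          rw [← hfy, hy]
          have hxc : x * c^2 = 0 := by rw [h2, mul_zero]
          linarith [hxc]
        · intro _
          exact hx0
      · rw [div_le_iff₀ hD]
        constructor <;> intro h <;> linarith [hfy, hDy, hNy]
    -- set identities and measures
    have hgpre : (fun ψ : ℝ => Real.cos ψ ^ 2) ⁻¹' Set.Iic x =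
        {ψ : ℝ | Real.cos (2*ψ) ≤ 2*x - 1} := by
      ext ψ
      simp only [Set.mem_preimage, Set.mem_Iic, Set.mem_setOf_eq, Real.cos_two_mul]
      constructor <;> intro h <;> linarith
    have hfpre : (fun ψ : ℝ => (1 + c) ^ 2 * Real.cos ψ ^ 2 * Real.sin ψ ^ 2 /
        (Real.cos ψ ^ 2 + c ^ 2 * Real.sin ψ ^ 2)) ⁻¹' Set.Iic x =
        {ψ : ℝ | Real.cos (2*ψ) ≤ ym} ∪ {ψ : ℝ | yp ≤ Real.cos (2*ψ)} := by
      ext ψ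
      simp only [Set.mem_preimage, Set.mem_Iic, Set.mem_union, Set.mem_setOf_eq]
      exact hE2 ψ
    rw [hgpre, hfpre, Set.inter_union_distrib_left]
    have hd1 : Disjoint (Set.Icc (0:ℝ) (2*π) ∩ {ψ : ℝ | Real.cos (2*ψ) ≤ ym})
        (Set.Icc (0:ℝ) (2*π) ∩ {ψ : ℝ | yp ≤ Real.cos (2*ψ)}) := by
      refine Set.disjoint_left.mpr ?_
      rintro ψ ⟨_, h1⟩ ⟨_, h2⟩
      simp only [Set.mem_setOf_eq] at h1 h2
      linarith
    have hm2 : MeasurableSet (Set.Icc (0:ℝ) (2*π) ∩ {ψ : ℝ | yp ≤ Real.cos (2*ψ)}) := by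
      refine hI.inter (measurableSet_le measurable_const ?_)
      fun_prop
    rw [measure_union hd1 hm2, cosL1 hym1 hym2.le, cosL2 hyp2.le hyp1,
      cosL1 (by linarith : (-1:ℝ) ≤ 2*x-1) (by linarith : 2*x-1 ≤ 1)]
    rw [measure_union (IccDisj (by linarith : π - A/2 < π + A/2)) measurableSet_Icc,
      measure_union (Set.disjoint_union_left.mpr
        ⟨IccDisj (by linarith : B/2 < 2*π - B/2), IccDisj (by linarith : π + B/2 < 2*π - B/2)⟩)
        measurableSet_Icc,
      measure_union (IccDisj (by linarith : B/2 < π - B/2)) measurableSet_Icc,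
      measure_union (IccDisj (by linarith : π - a/2 < π + a/2)) measurableSet_Icc]
    simp only [Real.volume_Icc]
    rw [← ENNReal.ofReal_add (by linarith) (by linarith),
      ← ENNReal.ofReal_add (by linarith) (by linarith),
      ← ENNReal.ofReal_add (by linarith) (by linarith),
      ← ENNReal.ofReal_add (by linarith) (by linarith),
      ← ENNReal.ofReal_add (by linarith) (by linarith)]
    congr 1
    linarith [haAB]
  · -- 1 ≤ x : both sets are the full interval
    have e1 : Set.Icc (0:ℝ) (2 * π) ∩ (fun ψ : ℝ => (1 + c) ^ 2 * Real.cos ψ ^ 2 *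
        Real.sin ψ ^ 2 / (Real.cos ψ ^ 2 + c ^ 2 * Real.sin ψ ^ 2)) ⁻¹' Set.Iic x =
        Set.Icc (0:ℝ) (2 * π) := by
      refine Set.inter_eq_left.mpr ?_
      intro ψ _
      simp only [Set.mem_preimage, Set.mem_Iic]
      rcases eq_or_lt_of_le (show (0:ℝ) ≤ Real.cos ψ ^ 2 + c^2 * Real.sin ψ ^ 2 by positivity)
        with hD | hD
      · rw [← hD, div_zero]; linarith
      · refine le_trans ((div_le_one hD).mpr ?_) hx1
        have hs : Real.sin ψ ^ 2 = 1 - Real.cos ψ ^ 2 := by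
          linarith [Real.sin_sq_add_cos_sq ψ]
        rw [hs]
        nlinarith [sq_nonneg (Real.cos ψ ^ 2 - c * (1 - Real.cos ψ ^ 2))]
    have e2 : Set.Icc (0:ℝ) (2 * π) ∩ (fun ψ : ℝ => Real.cos ψ ^ 2) ⁻¹' Set.Iic x =
        Set.Icc (0:ℝ) (2 * π) := by
      refine Set.inter_eq_left.mpr ?_
      intro ψ _
      simp only [Set.mem_preimage, Set.mem_Iic]
      nlinarith [Real.cos_sq_le_one ψ]
    rw [e1, e2]
end
end

section
/- If f ∈ ℝ[x₁,…,x_k] is a nonzero quadratic form and Σ is any nonzero positive semidefinite k×k matrix with positive diagonal entries, then W_{f,Σ} is stochastically dominated by (1/4)·χ²_k, i.e., W_{f,Σ} ≤_st (1/4)·χ²_k. Moreover, equality in distribution is achieved when f(x) = x₁² + ··· + x_k² and Σ is the identity matrix. -/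
open MeasureTheory ProbabilityTheory Matrix MvPolynomial Real

lemma euler_mono {ι : Type*} [Fintype ι] [DecidableEq ι] (d : ι →₀ ℕ) (c : ℝ) (x : ι → ℝ) :
    ∑ i, x i * eval x (pderiv i (monomial d c)) =
      ((∑ i, d i : ℕ) : ℝ) * eval x (monomial d c) := by
  have hprod : ∀ s : ι →₀ ℕ, ∀ a : ℝ, eval x (monomial s a) = a * ∏ j, x j ^ s j := by
    intro s a
    rw [eval_monomial, Finsupp.prod_fintype]
    intro j; exact pow_zero _
  have key : ∀ i, x i * eval x (pderiv i (monomial d c)) =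
      (d i : ℝ) * (c * ∏ j, x j ^ d j) := by
    intro i
    rw [pderiv_monomial, hprod]
    rcases Nat.eq_zero_or_pos (d i) with h | h
    · simp [h]
    have hsub : ∀ j, (d - Finsupp.single i 1 : ι →₀ ℕ) j = if j = i then d i - 1 else d j := by
      intro j
      rw [Finsupp.tsub_apply, Finsupp.single_apply]
      by_cases hji : j = i
      · subst hji; simp
      · rw [if_neg (fun h => hji h.symm), if_neg hji]; simp
    have hsplit1 : ∏ j, x j ^ (d - Finsupp.single i 1 : ι →₀ ℕ) j
        = x i ^ (d i - 1) * ∏ j ∈ Finset.univ.erase i, x j ^ d j := by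
      rw [← Finset.mul_prod_erase Finset.univ _ (Finset.mem_univ i), hsub i, if_pos rfl]
      congr 1
      exact Finset.prod_congr rfl fun j hj => by
        rw [hsub j, if_neg (Finset.mem_erase.mp hj).1]
    have hsplit2 : ∏ j, x j ^ d j = x i ^ d i * ∏ j ∈ Finset.univ.erase i, x j ^ d j :=
      (Finset.mul_prod_erase Finset.univ _ (Finset.mem_univ i)).symm
    have hx : x i * x i ^ (d i - 1) = x i ^ d i := by
      conv_rhs => rw [← Nat.sub_add_cancel h]
      rw [pow_succ]; ring
    rw [hsplit1, hsplit2, ← hx]; ring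
  rw [Finset.sum_congr rfl (fun i _ => key i), ← Finset.sum_mul, hprod]
  push_cast
  ring

lemma euler {ι : Type*} [Fintype ι] [DecidableEq ι] {n : ℕ} {f : MvPolynomial ι ℝ}
    (hf : f.IsHomogeneous n) (x : ι → ℝ) :
    ∑ i, x i * eval x (pderiv i f) = n * eval x f := by
  conv_lhs => rw [f.as_sum]
  conv_rhs => rw [f.as_sum]
  simp only [map_sum, Finset.mul_sum]
  rw [Finset.sum_comm]
  refine Finset.sum_congr rfl fun d hd => ?_
  rw [euler_mono]
  congr 2
  have hdeg := hf (MvPolynomial.mem_support_iff.mp hd)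
  rw [← hdeg]
  simp [Finsupp.weight_apply, Finsupp.sum_fintype]

noncomputable section

lemma measurable_evalPoly {ι : Type*} [Fintype ι] (f : MvPolynomial ι ℝ) :
    Measurable fun x : ι → ℝ => eval x f := by
  induction f using MvPolynomial.induction_on with
  | C a => simpa using measurable_const
  | add p q hp hq => simpa [Pi.add_def] using hp.add hq
  | mul_X p i hp => simpa [Pi.mul_def] using hp.mul (measurable_pi_apply i)

lemma measurable_waldRV {ι : Type*} [Fintype ι] (f : MvPolynomial ι ℝ)
    (S : Matrix ι ι ℝ) : Measurable (waldRV f S) := by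
  apply Measurable.div
  · exact (measurable_evalPoly f).pow_const 2
  · simp only [polyGrad, dotProduct, Matrix.mulVec]
    exact Finset.measurable_sum _ fun i _ => (measurable_evalPoly _).mul
      (Finset.measurable_sum _ fun j _ => (measurable_evalPoly _).const_mul _)

lemma measurable_mulVec {ι : Type*} [Fintype ι] (A : Matrix ι ι ℝ) :
    Measurable A.mulVec :=
  measurable_pi_lambda _ fun i => Finset.measurable_sum _ fun j _ =>
    (measurable_pi_apply j).const_mul _

lemma wald_le {ι : Type*} [Fintype ι] [DecidableEq ι] {f : MvPolynomial ι ℝ}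
    (hf : f.IsHomogeneous 2) (A : Matrix ι ι ℝ) (z : ι → ℝ) :
    waldRV f (A * Aᵀ) (A.mulVec z) ≤ 1 / 4 * ∑ i, z i ^ 2 := by
  set x := A.mulVec z with hx
  set g := polyGrad f x with hg
  set v := Aᵀ.mulVec g with hv
  have hden : g ⬝ᵥ (A * Aᵀ).mulVec g = ∑ i, v i ^ 2 := by
    rw [← Matrix.mulVec_mulVec, Matrix.dotProduct_mulVec, ← Matrix.mulVec_transpose]
    simp [hv, dotProduct, sq]
  have hnum : eval x f = (∑ i, z i * v i) / 2 := by
    have he := euler hf x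
    have h2 : ∑ i, z i * v i = ∑ i, x i * g i := by
      have : z ⬝ᵥ v = (z ᵥ* Aᵀ) ⬝ᵥ g := Matrix.dotProduct_mulVec z Aᵀ g
      rw [Matrix.vecMul_transpose] at this
      simpa [dotProduct] using this
    rw [h2]
    have h3 : ∑ i, x i * g i = 2 * eval x f := by
      simp only [hg, polyGrad]; exact_mod_cast he
    rw [h3]; ring
  have hcs : (∑ i, z i * v i) ^ 2 ≤ (∑ i, z i ^ 2) * (∑ i, v i ^ 2) :=
    Finset.sum_mul_sq_le_sq_mul_sq _ _ _
  rw [waldRV, ← hg, hden, hnum]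
  set a := ∑ i, z i * v i
  set b := ∑ i, v i ^ 2 with hb
  set c := ∑ i, z i ^ 2 with hc
  have hb0 : 0 ≤ b := Finset.sum_nonneg fun i _ => sq_nonneg _
  have hc0 : 0 ≤ c := Finset.sum_nonneg fun i _ => sq_nonneg _
  rcases eq_or_lt_of_le hb0 with h | h
  · rw [← h, div_zero]; positivity
  · rw [div_le_iff₀ h]; nlinarith

lemma waldRV_sum_sq (k : ℕ) (z : Fin k → ℝ) :
    waldRV (∑ i : Fin k, X i ^ 2) (1 : Matrix (Fin k) (Fin k) ℝ) z
      = 1 / 4 * ∑ i, z i ^ 2 := by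
  have h1 : eval z (∑ i : Fin k, X i ^ 2) = ∑ i, z i ^ 2 := by simp
  have h2 : polyGrad (∑ i : Fin k, X i ^ 2) z = fun i => 2 * z i := by
    funext i
    simp [polyGrad, Pi.single_apply, apply_ite (eval z)]
  rw [waldRV, h1, h2]
  have hden : (fun i => 2 * z i) ⬝ᵥ (1 : Matrix (Fin k) (Fin k) ℝ).mulVec (fun i => 2 * z i)
      = 4 * ∑ i, z i ^ 2 := by
    simp [dotProduct, Matrix.one_mulVec, Finset.mul_sum]
    exact Finset.sum_congr rfl fun i _ => by ring
  rw [hden]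
  set s := ∑ i, z i ^ 2 with hs
  rcases eq_or_ne s 0 with h | h
  · simp [h]
  · field_simp

/-- If `f` is a nonzero quadratic form in `k` variables and `Σ` is a nonzero
positive semidefinite matrix with positive diagonal entries, then
`W_{f,Σ} ≤_st (1/4)·χ²_k`; moreover, equality in distribution is achieved for
`f(x) = x₁² + ⋯ + x_k²` and `Σ = I`. -/
theorem waldRV_quadratic_upper_bound {k : ℕ}
    (f : MvPolynomial (Fin k) ℝ) (hf : f.IsHomogeneous 2) (hf0 : f ≠ 0)
    (S : Matrix (Fin k) (Fin k) ℝ) (hS : S.PosSemidef) (hS0 : S ≠ 0)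
    (hSdiag : ∀ i, 0 < S i i)
    (μ : Measure (Fin k → ℝ)) (hμ : IsCenteredGaussian μ S) :
    (∀ t : ℝ, μ.map (waldRV f S) (Set.Ioi t) ≤
        ((chiSq k).map (fun y => 1 / 4 * y)) (Set.Ioi t)) ∧
      (stdGaussian (Fin k)).map
          (waldRV (∑ i : Fin k, X i ^ 2) (1 : Matrix (Fin k) (Fin k) ℝ)) =
        (chiSq k).map (fun y => 1 / 4 * y) := by
  have hm3 : Measurable fun z : Fin k → ℝ => ∑ i, z i ^ 2 :=
    Finset.measurable_sum _ fun i _ => (measurable_pi_apply i).pow_const 2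
  have hm4 : Measurable fun y : ℝ => 1 / 4 * y := (measurable_id.const_mul _)
  constructor
  · intro t
    obtain ⟨A, hAS, hμeq⟩ := hμ
    rw [hμeq, Measure.map_map (measurable_waldRV f S) (measurable_mulVec A),
      Measure.map_apply ((measurable_waldRV f S).comp (measurable_mulVec A)) measurableSet_Ioi,
      chiSq, Measure.map_map hm4 hm3,
      Measure.map_apply (hm4.comp hm3) measurableSet_Ioi]
    apply measure_mono
    intro z hz
    simp only [Set.mem_preimage, Set.mem_Ioi, Function.comp_apply] at hz ⊢
    calc t < waldRV f S (A.mulVec z) := hz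
    _ ≤ 1 / 4 * ∑ i, z i ^ 2 := by rw [← hAS]; exact wald_le hf A z
  · have hW : waldRV (∑ i : Fin k, X i ^ 2) (1 : Matrix (Fin k) (Fin k) ℝ)
        = fun z => 1 / 4 * ∑ i, z i ^ 2 := funext fun z => waldRV_sum_sq k z
    rw [hW, chiSq, Measure.map_map hm4 hm3]
    rfl
end
end

section
/- Let X = (X₁, X₂)ᵀ be bivariate normal with mean zero, Var(X₁) = Var(X₂) = 1, and Cor(X₁,X₂) = ρ with |ρ| < 1. Then the random variable Q = 4·(1/X₁² − 2ρ/(X₁X₂) + 1/X₂²)^{-1} has expected value E[Q] = (1 + 2ρ²)/(1 − ρ²); in particular, the distribution of Q depends on ρ. -/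
open MeasureTheory ProbabilityTheory Matrix MvPolynomial Real

noncomputable section

section Aux
open Set Filter intervalIntegral
open scoped NNReal ENNReal

lemma radial_integral : ∫ x in Ioi (0:ℝ), x ^ 3 * Real.exp (-x ^ 2 / 2) = 2 := by
  have hderiv : ∀ x ∈ Ioi (0:ℝ),
      HasDerivAt (fun r : ℝ => -(r ^ 2 + 2) * Real.exp (-r ^ 2 / 2))
        (x ^ 3 * Real.exp (-x ^ 2 / 2)) x := by
    intro x _
    have h1 : HasDerivAt (fun r : ℝ => -(r ^ 2 + 2)) (-(2 * x)) x := by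
      exact (((hasDerivAt_pow 2 x).add_const 2).neg).congr_deriv (by norm_num)
    have h3 : HasDerivAt (fun r : ℝ => -r ^ 2 / 2) (-x) x := by
      have := ((hasDerivAt_pow 2 x).neg.div_const 2)
      exact this.congr_deriv (by norm_num; ring)
    have h2 : HasDerivAt (fun r : ℝ => Real.exp (-r ^ 2 / 2)) (-x * Real.exp (-x ^ 2 / 2)) x := by
      simpa [mul_comm] using h3.exp
    have := h1.mul h2
    exact this.congr_deriv (by ring)
  have hint : IntegrableOn (fun x : ℝ => x ^ 3 * Real.exp (-x ^ 2 / 2)) (Ioi 0) := by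
    have := integrableOn_rpow_mul_exp_neg_mul_sq (b := 1/2) (by norm_num) (s := 3) (by norm_num)
    refine this.congr_fun (fun x hx => ?_) measurableSet_Ioi
    dsimp only
    rw [show ((3:ℝ)) = ((3:ℕ):ℝ) by norm_num, Real.rpow_natCast,
      show -(1 / 2) * x ^ 2 = -x ^ 2 / 2 by ring]
  have htend : Tendsto (fun r : ℝ => -(r ^ 2 + 2) * Real.exp (-r ^ 2 / 2)) atTop (nhds 0) := by
    have hA : Tendsto (fun u : ℝ => u * Real.exp (-u)) atTop (nhds 0) := by
      simpa using Real.tendsto_pow_mul_exp_neg_atTop_nhds_zero 1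
    have hB : Tendsto (fun u : ℝ => Real.exp (-u)) atTop (nhds 0) := by
      simpa using Real.tendsto_exp_neg_atTop_nhds_zero
    have key : Tendsto (fun u : ℝ => -(2 * (u * Real.exp (-u)) + 2 * Real.exp (-u))) atTop (nhds 0) := by
      have := ((hA.const_mul 2).add (hB.const_mul 2)).neg
      simpa using this
    have h2 : Tendsto (fun r : ℝ => r ^ 2 / 2) atTop atTop := by
      apply Tendsto.atTop_div_const (by norm_num)
      exact tendsto_pow_atTop (by norm_num)
    refine (key.comp h2).congr (fun r => ?_)
    simp only [Function.comp]
    rw [show -(r ^ 2 / 2) = -r ^ 2 / 2 by ring]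
    ring
  have hcont : ContinuousWithinAt (fun r : ℝ => -(r ^ 2 + 2) * Real.exp (-r ^ 2 / 2)) (Ici 0) 0 := by
    apply Continuous.continuousWithinAt
    fun_prop
  have := integral_Ioi_of_hasDerivAt_of_tendsto hcont hderiv hint htend
  rw [this]
  norm_num

lemma cos4 : ∫ x in (-π)..π, cos x ^ 4 = 3 * π / 4 := by
  have h := integral_cos_pow (a := -π) (b := π) 2
  norm_num at h
  rw [h]; ring

lemma sin4 : ∫ x in (-π)..π, sin x ^ 4 = 3 * π / 4 := by
  have h := integral_sin_pow (a := -π) (b := π) 2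
  norm_num at h
  rw [h]; ring

lemma sin2cos2 : ∫ x in (-π)..π, sin x ^ 2 * cos x ^ 2 = π / 4 := by
  rw [integral_sin_sq_mul_cos_sq]
  have : Real.sin (4 * π) = 0 := by
    rw [show (4:ℝ) * π = 2*π + (2*π) by ring]
    simp [Real.sin_add]
  have h2 : Real.sin (4 * -π) = 0 := by
    rw [show (4:ℝ) * -π = -(2*π + 2*π) by ring]
    simp [Real.sin_add]
  rw [this, h2]
  ring

lemma sincos3 : ∫ x in (-π)..π, sin x * cos x ^ 3 = 0 := by
  have h := integral_sin_pow_mul_cos_pow_odd (a := -π) (b := π) 1 1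
  norm_num at h
  rw [h]

lemma sin3cos : ∫ x in (-π)..π, sin x ^ 3 * cos x = 0 := by
  have h := integral_sin_pow_odd_mul_cos_pow (a := -π) (b := π) 1 1
  norm_num at h
  rw [h]

lemma angular_integral (a b c d : ℝ) :
    ∫ x in (-π)..π, (a * cos x + b * sin x) ^ 2 * (c * cos x + d * sin x) ^ 2
      = π / 4 * ((a^2+b^2)*(c^2+d^2) + 2*(a*c+b*d)^2) := by
  have expand : ∀ x : ℝ, (a * cos x + b * sin x) ^ 2 * (c * cos x + d * sin x) ^ 2
      = (a^2*c^2) * cos x ^ 4 + (2*a^2*c*d + 2*a*b*c^2) * (sin x * cos x ^ 3)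
        + (a^2*d^2 + 4*a*b*c*d + b^2*c^2) * (sin x ^ 2 * cos x ^ 2)
        + (2*a*b*d^2 + 2*b^2*c*d) * (sin x ^ 3 * cos x) + (b^2*d^2) * sin x ^ 4 := by
    intro x; ring
  rw [integral_congr (g := fun x => (a^2*c^2) * cos x ^ 4 + (2*a^2*c*d + 2*a*b*c^2) * (sin x * cos x ^ 3)
        + (a^2*d^2 + 4*a*b*c*d + b^2*c^2) * (sin x ^ 2 * cos x ^ 2)
        + (2*a*b*d^2 + 2*b^2*c*d) * (sin x ^ 3 * cos x) + (b^2*d^2) * sin x ^ 4) (fun x _ => expand x)]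
  have i1 : IntervalIntegrable (fun x => (a^2*c^2) * cos x ^ 4) volume (-π) π :=
    (Continuous.intervalIntegrable (by fun_prop) _ _)
  have i2 : IntervalIntegrable (fun x => (2*a^2*c*d + 2*a*b*c^2) * (sin x * cos x ^ 3)) volume (-π) π :=
    (Continuous.intervalIntegrable (by fun_prop) _ _)
  have i3 : IntervalIntegrable (fun x => (a^2*d^2 + 4*a*b*c*d + b^2*c^2) * (sin x ^ 2 * cos x ^ 2)) volume (-π) π :=
    (Continuous.intervalIntegrable (by fun_prop) _ _)
  have i4 : IntervalIntegrable (fun x => (2*a*b*d^2 + 2*b^2*c*d) * (sin x ^ 3 * cos x)) volume (-π) π :=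
    (Continuous.intervalIntegrable (by fun_prop) _ _)
  have i5 : IntervalIntegrable (fun x => (b^2*d^2) * sin x ^ 4) volume (-π) π :=
    (Continuous.intervalIntegrable (by fun_prop) _ _)
  rw [integral_add (((i1.add i2).add i3).add i4) i5, integral_add ((i1.add i2).add i3) i4,
    integral_add (i1.add i2) i3, integral_add i1 i2,
    intervalIntegral.integral_const_mul, intervalIntegral.integral_const_mul, intervalIntegral.integral_const_mul, intervalIntegral.integral_const_mul,
    intervalIntegral.integral_const_mul, cos4, sin4, sin2cos2, sincos3, sin3cos]
  ring

lemma gauss_prod_eq : (gaussianReal 0 1).prod (gaussianReal 0 1) =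
    (volume : Measure (ℝ × ℝ)).withDensity
      (fun p => ENNReal.ofReal (gaussianPDFReal 0 1 p.1) * ENNReal.ofReal (gaussianPDFReal 0 1 p.2)) := by
  refine Measure.prod_eq fun s t hs ht => ?_
  rw [withDensity_apply _ (hs.prod ht), Measure.volume_eq_prod, ← Measure.prod_restrict,
    lintegral_prod_mul ((measurable_gaussianPDFReal 0 1).ennreal_ofReal.aemeasurable)
      ((measurable_gaussianPDFReal 0 1).ennreal_ofReal.aemeasurable)]
  rw [gaussianReal_apply 0 (by norm_num) s, gaussianReal_apply 0 (by norm_num) t]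
  rfl

lemma gauss_line_null (a b : ℝ) (hab : ¬(a = 0 ∧ b = 0)) :
    ((gaussianReal 0 1).prod (gaussianReal 0 1)) {p : ℝ × ℝ | a * p.1 + b * p.2 = 0} = 0 := by
  have hmeas : MeasurableSet {p : ℝ × ℝ | a * p.1 + b * p.2 = 0} := by
    apply measurableSet_eq_fun <;> fun_prop
  have habs := gaussianReal_absolutelyContinuous (0:ℝ) (v := 1) (by norm_num)
  have hsing : ∀ c : ℝ, (gaussianReal 0 1) {c} = 0 := fun c =>
    habs ((measure_singleton c : (volume : Measure ℝ) {c} = 0))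
  rcases eq_or_ne b 0 with hb | hb
  · have ha : a ≠ 0 := fun h => hab ⟨h, hb⟩
    rw [Measure.measure_prod_null hmeas]
    have h0 : ∀ᵐ x ∂(gaussianReal 0 1), x ≠ 0 := by
      have := hsing 0
      rw [ae_iff]
      convert this using 2
      ext x
      simp
    filter_upwards [h0] with x hx
    show (gaussianReal 0 1) (Prod.mk x ⁻¹' {p : ℝ × ℝ | a * p.1 + b * p.2 = 0}) = 0
    have : (Prod.mk x ⁻¹' {p : ℝ × ℝ | a * p.1 + b * p.2 = 0}) = ∅ := by
      ext y
      simp only [mem_preimage, mem_setOf_eq, mem_empty_iff_false, iff_false, hb]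
      intro h
      rcases mul_eq_zero.mp (by linarith : a * x = 0) with h' | h'
      · exact ha h'
      · exact hx h'
    rw [this]
    exact measure_empty
  · rw [Measure.measure_prod_null hmeas]
    refine Filter.Eventually.of_forall fun x => ?_
    show (gaussianReal 0 1) (Prod.mk x ⁻¹' {p : ℝ × ℝ | a * p.1 + b * p.2 = 0}) = 0
    have : (Prod.mk x ⁻¹' {p : ℝ × ℝ | a * p.1 + b * p.2 = 0}) = {-(a*x)/b} := by
      ext y
      simp only [mem_preimage, mem_setOf_eq, mem_singleton_iff]
      constructor
      · intro h; field_simp; linarith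
      · intro h; rw [h]; field_simp; ring
    rw [this]
    exact hsing _

lemma quad_ident (ρ a b c d x y : ℝ) (h1 : a^2+b^2 = 1) (h2 : c^2+d^2 = 1) (h3 : a*c+b*d = ρ) :
    (c*x+d*y)^2 - 2*ρ*((a*x+b*y)*(c*x+d*y)) + (a*x+b*y)^2 = (1-ρ^2)*(x^2+y^2) := by
  linear_combination (x^2*(1-c^2) + y^2*(1-d^2) - 2*x*y*c*d + (c^2+d^2-1)*(x^2+y^2)) * h1
    + (x^2*(1-a^2) + y^2*(1-b^2) - 2*x*y*a*b) * h2
    + (2*(a*x+b*y)*(c*x+d*y) - ((a*c+b*d) + ρ)*(x^2+y^2)) * h3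

lemma key_integral (ρ a b c d : ℝ) (hρ : 0 < 1 - ρ^2) (h1 : a^2+b^2 = 1) (h2 : c^2+d^2 = 1)
    (h3 : a*c+b*d = ρ) :
    ∫ p : ℝ × ℝ, 4 * (1/(a*p.1+b*p.2)^2 - 2*ρ/((a*p.1+b*p.2)*(c*p.1+d*p.2)) + 1/(c*p.1+d*p.2)^2)⁻¹
      ∂((gaussianReal 0 1).prod (gaussianReal 0 1)) = (1+2*ρ^2)/(1-ρ^2) := by
  set C : ℝ := 4/(1-ρ^2) with hC
  set G : ℝ × ℝ → ℝ :=
    fun p => C * (((a*p.1+b*p.2)*(c*p.1+d*p.2))^2 / (p.1^2+p.2^2)) with hG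
  have hab : ¬(a = 0 ∧ b = 0) := by rintro ⟨rfl, rfl⟩; norm_num at h1
  have hcd : ¬(c = 0 ∧ d = 0) := by rintro ⟨rfl, rfl⟩; norm_num at h2
  -- step 1: a.e. congruence
  have hA : ∀ᵐ p ∂((gaussianReal 0 1).prod (gaussianReal 0 1)), a*p.1+b*p.2 ≠ 0 := by
    rw [ae_iff]
    simpa [not_not] using gauss_line_null a b hab
  have hB : ∀ᵐ p ∂((gaussianReal 0 1).prod (gaussianReal 0 1)), c*p.1+d*p.2 ≠ 0 := by
    rw [ae_iff]
    simpa [not_not] using gauss_line_null c d hcd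
  have hae : (fun p : ℝ × ℝ => 4 * (1/(a*p.1+b*p.2)^2 - 2*ρ/((a*p.1+b*p.2)*(c*p.1+d*p.2))
      + 1/(c*p.1+d*p.2)^2)⁻¹) =ᵐ[(gaussianReal 0 1).prod (gaussianReal 0 1)] G := by
    filter_upwards [hA, hB] with p hX hY
    have hs : 0 < p.1^2 + p.2^2 := by
      rcases (show p.1 ≠ 0 ∨ p.2 ≠ 0 by
        by_contra h; push_neg at h; apply hX; rw [h.1, h.2]; ring) with h | h
      · positivity
      · positivity
    have hq := quad_ident ρ a b c d p.1 p.2 h1 h2 h3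
    have hD : 1/(a*p.1+b*p.2)^2 - 2*ρ/((a*p.1+b*p.2)*(c*p.1+d*p.2)) + 1/(c*p.1+d*p.2)^2
        = ((1-ρ^2)*(p.1^2+p.2^2)) / ((a*p.1+b*p.2)^2*(c*p.1+d*p.2)^2) := by
      rw [← hq, div_sub_div _ _ (pow_ne_zero 2 hX) (mul_ne_zero hX hY),
        div_add_div _ _ (mul_ne_zero (pow_ne_zero 2 hX) (mul_ne_zero hX hY)) (pow_ne_zero 2 hY),
        div_eq_div_iff (mul_ne_zero (mul_ne_zero (pow_ne_zero 2 hX) (mul_ne_zero hX hY)) (pow_ne_zero 2 hY))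
          (mul_ne_zero (pow_ne_zero 2 hX) (pow_ne_zero 2 hY))]; ring
    rw [hD, hG, hC]
    rw [inv_div]
    field_simp
  rw [integral_congr_ae hae, gauss_prod_eq]
  -- step 2: withDensity to volume integral
  have hdens : (fun p : ℝ × ℝ => ENNReal.ofReal (gaussianPDFReal 0 1 p.1)
      * ENNReal.ofReal (gaussianPDFReal 0 1 p.2))
      = fun p : ℝ × ℝ => ((Real.toNNReal (gaussianPDFReal 0 1 p.1 * gaussianPDFReal 0 1 p.2) : ℝ≥0) : ℝ≥0∞) := by
    funext p
    rw [← ENNReal.ofReal_mul (gaussianPDFReal_nonneg _ _ _)]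
    rfl
  have hfmeas : Measurable fun p : ℝ × ℝ =>
      Real.toNNReal (gaussianPDFReal 0 1 p.1 * gaussianPDFReal 0 1 p.2) :=
    (((measurable_gaussianPDFReal 0 1).comp measurable_fst).mul
      ((measurable_gaussianPDFReal 0 1).comp measurable_snd)).real_toNNReal
  rw [hdens, integral_withDensity_eq_integral_smul hfmeas]
  have hpdf : ∀ x : ℝ, gaussianPDFReal 0 1 x = (Real.sqrt (2*π))⁻¹ * Real.exp (-x^2/2) := by
    intro x
    rw [gaussianPDFReal_def]
    norm_num
  have hsmul : (fun p : ℝ × ℝ =>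
      Real.toNNReal (gaussianPDFReal 0 1 p.1 * gaussianPDFReal 0 1 p.2) • G p)
      = fun p : ℝ × ℝ => ((Real.sqrt (2*π))⁻¹ * Real.exp (-p.1^2/2))
          * ((Real.sqrt (2*π))⁻¹ * Real.exp (-p.2^2/2)) * G p := by
    funext p
    rw [NNReal.smul_def, smul_eq_mul, Real.coe_toNNReal _ (mul_nonneg (gaussianPDFReal_nonneg _ _ _)
      (gaussianPDFReal_nonneg _ _ _)), hpdf, hpdf]
  rw [hsmul]
  -- step 3: polar coordinates
  rw [← integral_comp_polarCoord_symm]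
  rw [show polarCoord.target = Ioi (0:ℝ) ×ˢ Ioo (-π) π from rfl]
  -- step 4: simplify integrand on the target set
  rw [setIntegral_congr_fun (measurableSet_Ioi.prod measurableSet_Ioo)
    (g := fun q : ℝ × ℝ => (q.1^3 * Real.exp (-q.1^2/2)) *
      ((2*π)⁻¹ * C * ((a*cos q.2+b*sin q.2)^2 * (c*cos q.2+d*sin q.2)^2)))
    (by
      rintro ⟨r, θ⟩ ⟨hr, -⟩
      simp only [polarCoord_symm_apply, smul_eq_mul, hG]
      have hr0 : (r:ℝ) ≠ 0 := ne_of_gt hr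
      have hcs : (r*cos θ)^2 + (r*sin θ)^2 = r^2 := by
        linear_combination r^2 * (sin_sq_add_cos_sq θ)
      have hexp : Real.exp (-(r*cos θ)^2/2) * Real.exp (-(r*sin θ)^2/2) = Real.exp (-r^2/2) := by
        rw [← Real.exp_add]; congr 1; linear_combination (-(1:ℝ)/2) * hcs
      have hsqrt : (Real.sqrt (2*π))⁻¹ * (Real.sqrt (2*π))⁻¹ = (2*π)⁻¹ := by
        rw [← mul_inv, Real.mul_self_sqrt (by positivity)]
      have hnum : ((a*(r*cos θ)+b*(r*sin θ))*(c*(r*cos θ)+d*(r*sin θ)))^2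
          = r^4 * ((a*cos θ+b*sin θ)^2*(c*cos θ+d*sin θ)^2) := by ring
      rw [hcs, hnum]
      rw [show r^4 * ((a*cos θ+b*sin θ)^2*(c*cos θ+d*sin θ)^2) / r^2
        = r^2 * ((a*cos θ+b*sin θ)^2*(c*cos θ+d*sin θ)^2) by field_simp]
      calc r * ((Real.sqrt (2*π))⁻¹ * Real.exp (-(r*cos θ)^2/2)
            * ((Real.sqrt (2*π))⁻¹ * Real.exp (-(r*sin θ)^2/2))
            * (C * (r^2 * ((a*cos θ+b*sin θ)^2*(c*cos θ+d*sin θ)^2))))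
          = ((Real.sqrt (2*π))⁻¹ * (Real.sqrt (2*π))⁻¹)
            * (Real.exp (-(r*cos θ)^2/2) * Real.exp (-(r*sin θ)^2/2))
            * (r^3 * C * ((a*cos θ+b*sin θ)^2*(c*cos θ+d*sin θ)^2)) := by ring
        _ = (r^3 * Real.exp (-r^2/2)) *
            ((2*π)⁻¹ * C * ((a*cos θ+b*sin θ)^2 * (c*cos θ+d*sin θ)^2)) := by
            rw [hexp, hsqrt]; ring)]
  -- step 5: separate the product integral
  rw [Measure.volume_eq_prod]
  rw [setIntegral_prod_mul (fun r : ℝ => r^3 * Real.exp (-r^2/2))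
    (fun θ : ℝ => (2*π)⁻¹ * C * ((a*cos θ+b*sin θ)^2 * (c*cos θ+d*sin θ)^2))]
  rw [radial_integral]
  have hang : ∫ θ in Ioo (-π) π, (2*π)⁻¹ * C * ((a*cos θ+b*sin θ)^2 * (c*cos θ+d*sin θ)^2)
      = (2*π)⁻¹ * C * (π/4 * ((a^2+b^2)*(c^2+d^2) + 2*(a*c+b*d)^2)) := by
    rw [← MeasureTheory.integral_Ioc_eq_integral_Ioo,
      ← intervalIntegral.integral_of_le (by linarith [Real.pi_pos] : -π ≤ π),
      intervalIntegral.integral_const_mul, angular_integral]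
  rw [hang, h1, h2, h3, hC]
  have hπ : (π:ℝ) ≠ 0 := Real.pi_ne_zero
  field_simp
end Aux

/-- Let `X = (X₁, X₂)ᵀ` be centered bivariate normal with unit variances and
correlation `ρ`, `|ρ| < 1`.  Then `Q = 4·(1/X₁² − 2ρ/(X₁X₂) + 1/X₂²)⁻¹` has expected value
`E[Q] = (1 + 2ρ²)/(1 − ρ²)`; in particular, the distribution of `Q` depends on `ρ`. -/
theorem negative_weight_expectation (ρ : ℝ) (hρ : |ρ| < 1)
    (μ : Measure (Fin 2 → ℝ)) (hμ : IsCenteredGaussian μ !![1, ρ; ρ, 1]) :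
    ∫ x, 4 * (1 / (x 0) ^ 2 - 2 * ρ / (x 0 * x 1) + 1 / (x 1) ^ 2)⁻¹ ∂μ =
      (1 + 2 * ρ ^ 2) / (1 - ρ ^ 2) := by
  obtain ⟨A, hAS, hμeq⟩ := hμ
  have h1 : A 0 0 ^ 2 + A 0 1 ^ 2 = 1 := by
    have := congrFun (congrFun hAS 0) 0
    simpa [Matrix.mul_apply, Fin.sum_univ_two, Matrix.transpose_apply, sq] using this
  have h2 : A 1 0 ^ 2 + A 1 1 ^ 2 = 1 := by
    have := congrFun (congrFun hAS 1) 1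
    simpa [Matrix.mul_apply, Fin.sum_univ_two, Matrix.transpose_apply, sq] using this
  have h3 : A 0 0 * A 1 0 + A 0 1 * A 1 1 = ρ := by
    have := congrFun (congrFun hAS 0) 1
    simpa [Matrix.mul_apply, Fin.sum_univ_two, Matrix.transpose_apply] using this
  have hρ2 : 0 < 1 - ρ ^ 2 := by
    rcases abs_lt.mp hρ with ⟨hl, hr⟩
    nlinarith
  have hmeas : Measurable (Matrix.mulVec A) := by
    apply measurable_pi_lambda
    intro i
    simp only [Matrix.mulVec, dotProduct]
    exact Finset.measurable_sum _ (fun j _ => (measurable_pi_apply j).const_mul _)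
  have hintmeas : Measurable (fun x : Fin 2 → ℝ =>
      4 * (1 / (x 0) ^ 2 - 2 * ρ / (x 0 * x 1) + 1 / (x 1) ^ 2)⁻¹) := by
    fun_prop
  rw [hμeq, integral_map hmeas.aemeasurable hintmeas.aestronglyMeasurable]
  have hcomp : (fun z : Fin 2 → ℝ =>
      4 * (1 / (A.mulVec z 0) ^ 2 - 2 * ρ / (A.mulVec z 0 * A.mulVec z 1)
        + 1 / (A.mulVec z 1) ^ 2)⁻¹)
      = fun z : Fin 2 → ℝ => (fun p : ℝ × ℝ =>
          4 * (1/(A 0 0*p.1+A 0 1*p.2)^2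
            - 2*ρ/((A 0 0*p.1+A 0 1*p.2)*(A 1 0*p.1+A 1 1*p.2))
            + 1/(A 1 0*p.1+A 1 1*p.2)^2)⁻¹) (MeasurableEquiv.finTwoArrow z) := by
    funext z
    simp [Matrix.mulVec, dotProduct, Fin.sum_univ_two, MeasurableEquiv.finTwoArrow]
  rw [show stdGaussian (Fin 2) = Measure.pi fun _ => gaussianReal 0 1 from rfl]
  have htrans := (measurePreserving_finTwoArrow (gaussianReal 0 1)).integral_comp
    (MeasurableEquiv.measurableEmbedding _) (fun p : ℝ × ℝ =>
      4 * (1/(A 0 0*p.1+A 0 1*p.2)^2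
        - 2*ρ/((A 0 0*p.1+A 0 1*p.2)*(A 1 0*p.1+A 1 1*p.2))
        + 1/(A 1 0*p.1+A 1 1*p.2)^2)⁻¹)
  rw [hcomp, htrans]
  exact key_integral ρ (A 0 0) (A 0 1) (A 1 0) (A 1 1) hρ2 h1 h2 h3
end
end
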